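/- arXiv:0806.2582 — 4 statements merged into one kernel-verified Lean document; each statement's English description precedes it below -/
import Mathlib

section
/- Suppose a ∈ (-∞, 0) is finite. Then the Luxemburg norm N_û and the essential-supremum norm are equivalent on L^∞(P): for every f ∈ L^∞(P) one has ‖f‖_∞ ≤ (-a)·N_û(f), and there exists a constant k > 0, independent of f, such that k·N_û(f) ≤ ‖f‖_∞ for every f ∈ L^∞(P). -/
open MeasureTheory Filter Set Topology
open scoped ENNReal

noncomputable section

/-- The positive part of an extended real number, as an element of `ℝ≥0∞`. -/
def EReal.toENN (x : EReal) : ℝ≥0∞ := if x = ⊤ then ⊤ else ENNReal.ofReal x.toReal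

theorem EReal.toENN_mono {x y : EReal} (h : x ≤ y) : x.toENN ≤ y.toENN := by
  unfold EReal.toENN
  by_cases hy : y = ⊤
  · simp [hy]
  · rw [if_neg hy]
    have hx : x ≠ ⊤ := fun hx => hy (top_le_iff.mp (hx ▸ h))
    rw [if_neg hx]
    by_cases hxb : x = ⊥
    · simp [hxb]
    · exact ENNReal.ofReal_le_ofReal (EReal.toReal_le_toReal h hxb hy)

theorem EReal.toENN_top : (⊤ : EReal).toENN = ⊤ := rfl

theorem EReal.toENN_coe (x : ℝ) : (x : EReal).toENN = ENNReal.ofReal x := by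
  unfold EReal.toENN
  rw [if_neg (EReal.coe_ne_top x), EReal.toReal_coe]

/-- Lemma 8 of Biagini–Frittelli.  For a finite `a < 0`, the Luxemburg norm
`N_û` and the essential-supremum norm are equivalent on `L^∞(P)`:
`‖f‖_∞ ≤ (-a) · N_û(f)` for every `f ∈ L^∞(P)`, and there is a constant `k > 0`, independent
of `f`, with `k · N_û(f) ≤ ‖f‖_∞` for every `f ∈ L^∞(P)`. -/
theorem statement0
    {Ω : Type*} [MeasurableSpace Ω] (P : Measure Ω) [IsProbabilityMeasure P]
    (a : ℝ) (ha : a < 0)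
    (u : ℝ → EReal)
    (hu_ne_top : ∀ x : ℝ, u x ≠ ⊤)
    (hu_bot : ∀ x : ℝ, x < a → u x = ⊥)
    (hu_fin : ∀ x : ℝ, a < x → u x ≠ ⊥)
    (hu_mono : Monotone u)
    (hu_conc : ∀ x y t : ℝ, a < x → a < y → 0 ≤ t → t ≤ 1 →
      ((t * (u x).toReal + (1 - t) * (u y).toReal : ℝ) : EReal) ≤ u (t * x + (1 - t) * y))
    -- the Young function `û(x) = -u(-|x|) + u(0)`
    (uhat : ℝ → ℝ≥0∞)
    (huhat : ∀ x : ℝ, uhat x = (u 0 - u (-|x|)).toENN)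
    -- the Luxemburg norm
    (Nu : (Ω → ℝ) → ℝ)
    (hNu : ∀ f : Ω → ℝ, Nu f = sInf {c : ℝ | 0 < c ∧ ∫⁻ ω, uhat (f ω / c) ∂P ≤ 1}) :
    (∀ f : Ω → ℝ, MemLp f ⊤ P → (eLpNorm f ⊤ P).toReal ≤ (-a) * Nu f) ∧
    ∃ k : ℝ, 0 < k ∧ ∀ f : Ω → ℝ, MemLp f ⊤ P →
      k * Nu f ≤ (eLpNorm f ⊤ P).toReal := by
  have hu0_bot : u 0 ≠ ⊥ := hu_fin 0 ha
  have hu0_top : u 0 ≠ ⊤ := hu_ne_top 0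
  set x0 : ℝ := -a / 2 with hx0def
  have hx0 : 0 < x0 := by simp only [hx0def]; linarith
  have hx0a : a < -x0 := by simp only [hx0def]; linarith
  have hx0a' : x0 < -a := by simp only [hx0def]; linarith
  have hux0_bot : u (-x0) ≠ ⊥ := hu_fin _ hx0a
  have hux0_top : u (-x0) ≠ ⊤ := hu_ne_top _
  set M : ℝ := (u 0).toReal - (u (-x0)).toReal with hM
  have hM0 : 0 ≤ M := by
    have h1 := hu_mono (show -x0 ≤ 0 by linarith)
    have h2 := EReal.toReal_le_toReal h1 hux0_bot hu0_top
    simp only [hM]; linarith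
  set r : ℝ := x0 / (M + 1) with hr
  have hrpos : 0 < r := div_pos hx0 (by linarith)
  have hrx0 : r ≤ x0 := by
    rw [hr, div_le_iff₀ (by linarith)]; nlinarith
  -- û is ≤ 1 on [-r, r]
  have huhat_le_one : ∀ y : ℝ, |y| ≤ r → uhat y ≤ 1 := by
    intro y hy
    set s : ℝ := |y| with hs
    have hs0 : 0 ≤ s := abs_nonneg y
    have hsx0 : s ≤ x0 := le_trans hy hrx0
    set t : ℝ := s / x0 with ht
    have ht0 : 0 ≤ t := div_nonneg hs0 hx0.le
    have ht1 : t ≤ 1 := by rw [ht, div_le_one hx0]; exact hsx0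
    have hconc := hu_conc (-x0) 0 t hx0a ha ht0 ht1
    have harg : t * (-x0) + (1 - t) * 0 = -s := by
      rw [ht, mul_zero, add_zero, mul_neg, div_mul_cancel₀ _ hx0.ne']
    rw [harg] at hconc
    have hus_top : u (-s) ≠ ⊤ := hu_ne_top _
    have hus_bot : u (-s) ≠ ⊥ := by
      intro hb
      rw [hb, le_bot_iff] at hconc
      exact EReal.coe_ne_bot _ hconc
    have hconc' : t * (u (-x0)).toReal + (1 - t) * (u 0).toReal ≤ (u (-s)).toReal := by
      rw [← EReal.coe_toReal hus_top hus_bot] at hconc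
      exact_mod_cast hconc
    have hdiff : (u 0).toReal - (u (-s)).toReal ≤ t * M := by
      simp only [hM]; nlinarith
    have hM1 : (0:ℝ) < M + 1 := by linarith
    have hrM : r * (M + 1) = x0 := by rw [hr]; field_simp
    have htM : t * M ≤ 1 := by
      have ht' : t * x0 ≤ r := by
        rw [ht, div_mul_cancel₀ _ hx0.ne']; exact hy
      nlinarith [hrM, ht', hx0, hM0, ht0]
    rw [huhat y, ← hs]
    rw [← EReal.coe_toReal hu0_top hu0_bot, ← EReal.coe_toReal hus_top hus_bot,
      ← EReal.coe_sub, EReal.toENN_coe]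
    calc ENNReal.ofReal ((u 0).toReal - (u (-s)).toReal)
        ≤ ENNReal.ofReal 1 := ENNReal.ofReal_le_ofReal (le_trans hdiff htM)
      _ = 1 := ENNReal.ofReal_one
  -- û is ⊤ beyond -a
  have huhat_top : ∀ y : ℝ, -a < |y| → uhat y = ⊤ := by
    intro y hy
    rw [huhat y, hu_bot (-|y|) (by linarith), EReal.sub_bot hu0_bot, EReal.toENN_top]
  -- a.e. bound for Memℒp ⊤ functions
  have hae_bound : ∀ f : Ω → ℝ, MemLp f ⊤ P →
      ∀ᵐ ω ∂P, |f ω| ≤ (eLpNorm f ⊤ P).toReal := by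
    intro f hf
    have h1 : ∀ᵐ ω ∂P, (‖f ω‖₊ : ℝ≥0∞) ≤ eLpNormEssSup f P := ae_le_eLpNormEssSup
    have hfin : eLpNormEssSup f P ≠ ⊤ := by
      rw [← eLpNorm_exponent_top]; exact hf.2.ne
    filter_upwards [h1] with ω hω
    have := ENNReal.toReal_mono hfin hω
    simpa [eLpNorm_exponent_top, Real.norm_eq_abs] using this
  -- membership criterion for the Luxemburg set
  have hmem : ∀ f : Ω → ℝ, MemLp f ⊤ P → ∀ c : ℝ, 0 < c →
      (eLpNorm f ⊤ P).toReal ≤ r * c →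
      c ∈ {c : ℝ | 0 < c ∧ ∫⁻ ω, uhat (f ω / c) ∂P ≤ 1} := by
    intro f hf c hc hbound
    refine ⟨hc, ?_⟩
    have hae : ∀ᵐ ω ∂P, uhat (f ω / c) ≤ 1 := by
      filter_upwards [hae_bound f hf] with ω hω
      apply huhat_le_one
      rw [abs_div, abs_of_pos hc, div_le_iff₀ hc]
      calc |f ω| ≤ (eLpNorm f ⊤ P).toReal := hω
        _ ≤ r * c := hbound
    calc ∫⁻ ω, uhat (f ω / c) ∂P ≤ ∫⁻ _, 1 ∂P := lintegral_mono_ae hae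
      _ = 1 := by simp
  -- the set is bounded below
  have hbdd : ∀ f : Ω → ℝ,
      BddBelow {c : ℝ | 0 < c ∧ ∫⁻ ω, uhat (f ω / c) ∂P ≤ 1} :=
    fun f => ⟨0, fun c hc => hc.1.le⟩
  -- the set is nonempty for f ∈ L^∞
  have hne : ∀ f : Ω → ℝ, MemLp f ⊤ P →
      {c : ℝ | 0 < c ∧ ∫⁻ ω, uhat (f ω / c) ∂P ≤ 1}.Nonempty := by
    intro f hf
    have hB : 0 ≤ (eLpNorm f ⊤ P).toReal := ENNReal.toReal_nonneg
    refine ⟨(eLpNorm f ⊤ P).toReal / r + 1, hmem f hf _ (by positivity) ?_⟩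
    rw [mul_add, mul_one, mul_div_cancel₀ _ hrpos.ne']
    linarith
  -- measurability of û
  have huhat_meas : Measurable uhat := by
    have hg : Monotone (fun s : ℝ => (u 0 - u (-s)).toENN) := by
      intro s s' hss
      exact EReal.toENN_mono (EReal.sub_le_sub le_rfl (hu_mono (by linarith)))
    have : uhat = (fun s : ℝ => (u 0 - u (-s)).toENN) ∘ (fun y : ℝ => |y|) := by
      funext y; simp [huhat y]
    rw [this]
    exact hg.measurable.comp continuous_abs.measurable
  constructor
  · -- first inequality
    intro f hf
    set S := {c : ℝ | 0 < c ∧ ∫⁻ ω, uhat (f ω / c) ∂P ≤ 1} with hS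
    have hlow : ∀ c ∈ S, (eLpNorm f ⊤ P).toReal ≤ -a * c := by
      rintro c ⟨hc, hint⟩
      have haemeas : AEMeasurable (fun ω => uhat (f ω / c)) P := by
        exact huhat_meas.comp_aemeasurable ((hf.1.aemeasurable).div_const c)
      have hlt := ae_lt_top' haemeas (lt_of_le_of_lt hint (by norm_num)).ne
      have hae : ∀ᵐ ω ∂P, ‖f ω‖ ≤ -a * c := by
        filter_upwards [hlt] with ω hω
        rw [Real.norm_eq_abs]
        by_contra hcon
        push_neg at hcon
        have : -a < |f ω / c| := by
          rw [abs_div, abs_of_pos hc, lt_div_iff₀ hc]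
          linarith
        rw [huhat_top _ this] at hω
        exact lt_irrefl _ hω
      have hle := eLpNorm_le_of_ae_bound (f := f) (p := ⊤) (μ := P) hae
      simp only [ENNReal.toReal_top, inv_zero, ENNReal.rpow_zero, measure_univ, one_mul] at hle
      exact ENNReal.toReal_le_of_le_ofReal (by nlinarith) hle
    have hlow' : ∀ c ∈ S, (eLpNorm f ⊤ P).toReal / (-a) ≤ c := by
      intro c hc
      rw [div_le_iff₀ (by linarith)]
      have := hlow c hc; linarith [mul_comm c (-a)]
    have hsinf := le_csInf (hne f hf) hlow'
    rw [hNu f]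
    rw [div_le_iff₀ (by linarith : (0:ℝ) < -a)] at hsinf
    linarith [mul_comm (sInf S) (-a)]
  · -- second inequality
    refine ⟨r, hrpos, fun f hf => ?_⟩
    set B := (eLpNorm f ⊤ P).toReal with hB
    have hB0 : 0 ≤ B := ENNReal.toReal_nonneg
    set S := {c : ℝ | 0 < c ∧ ∫⁻ ω, uhat (f ω / c) ∂P ≤ 1} with hS
    have hkey : sInf S ≤ B / r := by
      by_contra hcon
      push_neg at hcon
      obtain ⟨c, hc1, hc2⟩ := exists_between hcon
      have hcpos : 0 < c := lt_of_le_of_lt (div_nonneg hB0 hrpos.le) hc1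
      have hcS : c ∈ S := by
        apply hmem f hf c hcpos
        rw [div_lt_iff₀ hrpos] at hc1
        rw [← hB]; linarith [mul_comm c r]
      exact absurd (csInf_le (hbdd f) hcS) (not_le.mpr hc2)
    rw [hNu f, ← hS]
    calc r * sInf S ≤ r * (B / r) := by
          apply mul_le_mul_of_nonneg_left hkey hrpos.le
      _ = B := mul_div_cancel₀ B hrpos.ne'
end
end

section
/- Let β := D⁻u(0) ∈ [0, ∞) be the left derivative of u at 0 (which exists and is finite by concavity, since 0 lies in the interior (a, ∞) of the effective domain of u). Then Φ(β) = u(0), and the convex conjugate Φ̂ of û admits the representation: Φ̂(y) = 0 if |y| ≤ β, and Φ̂(y) = Φ(|y|) - Φ(β) if |y| > β. -/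
open MeasureTheory Filter Set Topology
open scoped ENNReal

noncomputable section

lemma EReal.toENN_coe_s3 (r : ℝ) : EReal.toENN (r : EReal) = ENNReal.ofReal r := by
  simp [EReal.toENN]

lemma EReal.toENN_top_s3 : EReal.toENN ⊤ = ⊤ := by simp [EReal.toENN]

lemma EReal.coe_ennreal_iSup {ι : Sort*} [Nonempty ι] (g : ι → ℝ≥0∞) :
    ((⨆ i, g i : ℝ≥0∞) : EReal) = ⨆ i, (g i : EReal) :=
  Monotone.map_ciSup_of_continuousAt continuous_coe_ennreal_ereal.continuousAt
    (fun _ _ h => EReal.coe_ennreal_le_coe_ennreal_iff.2 h)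

/-- Let `β := D⁻u(0) ∈ [0, ∞)` be the left derivative of `u` at `0` (it
exists and is finite by concavity).  Then `Φ(β) = u(0)` and the convex conjugate `Φ̂` of
`û` satisfies `Φ̂(y) = 0` for `|y| ≤ β` and `Φ̂(y) = Φ(|y|) - Φ(β)` for `|y| > β`. -/
theorem statement3
    (a : EReal) (ha : a < 0)
    (u : ℝ → EReal)
    (hu_ne_top : ∀ x : ℝ, u x ≠ ⊤)
    (hu_bot : ∀ x : ℝ, (x : EReal) < a → u x = ⊥)
    (hu_fin : ∀ x : ℝ, a < (x : EReal) → u x ≠ ⊥)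
    (hu_mono : Monotone u)
    (hu_conc : ∀ x y t : ℝ, a < (x : EReal) → a < (y : EReal) → 0 ≤ t → t ≤ 1 →
      ((t * (u x).toReal + (1 - t) * (u y).toReal : ℝ) : EReal) ≤ u (t * x + (1 - t) * y))
    (hu_lim : Tendsto u atBot (𝓝 ⊥))
    -- the convex conjugate `Φ(y) = sup_x (u(x) - x·y)` of the utility `u`
    (Phi : ℝ → EReal)
    (hPhi : ∀ y : ℝ, Phi y = ⨆ x : ℝ, (u x - ((x * y : ℝ) : EReal)))
    -- the Young function `û(x) = -u(-|x|) + u(0)`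
    (uhat : ℝ → ℝ≥0∞)
    (huhat : ∀ x : ℝ, uhat x = (u 0 - u (-|x|)).toENN)
    -- its convex conjugate `Φ̂(y) = sup_x (x·y - û(x))`
    (Phat : ℝ → ℝ≥0∞)
    (hPhat : ∀ y : ℝ, Phat y = ⨆ x : ℝ, (ENNReal.ofReal (x * y) - uhat x)) :
    -- the left derivative of `u` at `0` exists …
    (∃ β : ℝ, HasDerivWithinAt (fun x : ℝ => (u x).toReal) β (Iio 0) 0) ∧
    -- … it is nonnegative, and the asserted identities hold
    ∀ β : ℝ, HasDerivWithinAt (fun x : ℝ => (u x).toReal) β (Iio 0) 0 →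
      0 ≤ β ∧
      Phi β = u 0 ∧
      (∀ y : ℝ, |y| ≤ β → Phat y = 0) ∧
      (∀ y : ℝ, β < |y| → (Phat y : EReal) = Phi |y| - Phi β) := by
  classical
  -- basic setup
  obtain ⟨r, har, hr0E⟩ := EReal.exists_between_coe_real ha
  have hr0 : r < (0 : ℝ) := by exact_mod_cast hr0E
  set D : Set ℝ := {x : ℝ | a < (x : EReal)} with hD
  set f : ℝ → ℝ := fun x => (u x).toReal with hf
  have hD0 : (0 : ℝ) ∈ D := by simpa [hD] using ha
  have hD1 : (1 : ℝ) ∈ D := by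
    simp only [hD, mem_setOf_eq]
    exact ha.trans (by exact_mod_cast (zero_lt_one (α := ℝ)))
  have hDr : r ∈ D := har
  have hfin : ∀ x ∈ D, u x ≠ ⊥ := fun x hx => hu_fin x hx
  have hco : ∀ x ∈ D, u x = ((f x : ℝ) : EReal) := fun x hx =>
    (EReal.coe_toReal (hu_ne_top x) (hfin x hx)).symm
  have hDconv : Convex ℝ D := by
    have : D.OrdConnected :=
      ⟨fun x hx y _ z hz => lt_of_lt_of_le hx (EReal.coe_le_coe_iff.2 hz.1)⟩
    exact this.convex
  have hconc : ConcaveOn ℝ D f := by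
    refine ⟨hDconv, fun x hx y hy s t hs ht hst => ?_⟩
    have hs1 : s ≤ 1 := by linarith
    have key := hu_conc x y s hx hy hs hs1
    have hts : t = 1 - s := by linarith
    subst hts
    have hmem : s * x + (1 - s) * y ∈ D := by
      have := hDconv hx hy hs ht hst
      simpa [smul_eq_mul] using this
    rw [hco _ hmem] at key
    have := EReal.coe_le_coe_iff.1 key
    simpa [smul_eq_mul, hf] using this
  have hfmono : ∀ x ∈ D, ∀ y, x ≤ y → f x ≤ f y := by
    intro x hx y hxy
    exact EReal.toReal_le_toReal (hu_mono hxy) (hfin x hx) (hu_ne_top y)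
  -- the slope function through 0
  set S : ℝ → ℝ := fun x => (f x - f 0) / (x - 0) with hS
  have hsec : ∀ x ∈ D, ∀ y ∈ D, x ≠ 0 → y ≠ 0 → x ≤ y → S y ≤ S x := by
    intro x hx y hy hx0 hy0 hxy
    have key := hconc.neg.secant_mono hD0 hx hy hx0 hy0 hxy
    simp only [Pi.neg_apply] at key
    have e1 : ∀ p q : ℝ, -p - -q = -(p - q) := fun p q => by ring
    rw [e1, e1, neg_div, neg_div] at key
    simpa [hS] using neg_le_neg_iff.1 key
  have hSslope : slope f 0 = S := by
    funext x
    simp [hS, slope_def_field]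
  -- the slope is antitone on `Ioo r 0` and bounded below by `S 1`
  have hanti : AntitoneOn S (Ioo r 0) := by
    intro x hx y hy hxy
    have hxD : x ∈ D := lt_trans har (by exact_mod_cast hx.1)
    have hyD : y ∈ D := lt_trans har (by exact_mod_cast hy.1)
    exact hsec x hxD y hyD (ne_of_lt hx.2) (ne_of_lt hy.2) hxy
  have hlb : ∀ x ∈ D, x ≠ 0 → x ≤ 1 → S 1 ≤ S x := by
    intro x hx hx0 hx1
    exact hsec x hx 1 hD1 hx0 one_ne_zero hx1
  have hbdd : BddBelow (S '' Ioo r 0) := by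
    refine ⟨S 1, fun z hz => ?_⟩
    obtain ⟨x, hx, rfl⟩ := hz
    exact hlb x (lt_trans har (by exact_mod_cast hx.1)) (ne_of_lt hx.2) (hx.2.le.trans zero_le_one)
  have hne : (Ioo r 0).Nonempty := ⟨r / 2, by constructor <;> linarith⟩
  have htend0 : Tendsto S (𝓝[<] (0:ℝ)) (𝓝 (sInf (S '' Ioo r 0))) :=
    hanti.tendsto_nhdsWithin_Ioo_left hne hbdd
  have hslope_iff : ∀ b : ℝ, HasDerivWithinAt f b (Iio 0) 0 ↔ Tendsto S (𝓝[<] (0:ℝ)) (𝓝 b) := by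
    intro b
    rw [hasDerivWithinAt_iff_tendsto_slope, hSslope]
    have : (Iio (0:ℝ)) \ {0} = Iio 0 := diff_singleton_eq_self (by simp)
    rw [this]
  have hex : HasDerivWithinAt f (sInf (S '' Ioo r 0)) (Iio 0) 0 := (hslope_iff _).2 htend0
  refine ⟨⟨_, hex⟩, ?_⟩
  intro β hβ
  have htend : Tendsto S (𝓝[<] (0:ℝ)) (𝓝 β) := (hslope_iff β).1 hβ
  -- key slope bounds
  have key1 : ∀ x ∈ D, x < 0 → β ≤ S x := by
    intro x hx hx0
    refine le_of_tendsto htend ?_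
    filter_upwards [Ioo_mem_nhdsLT hx0] with z hz
    exact hsec x hx z
      (show z ∈ D from lt_trans (show a < (x:EReal) from hx) (by exact_mod_cast hz.1))
      (ne_of_lt hx0) (ne_of_lt hz.2) hz.1.le
  have key2 : ∀ x ∈ D, 0 < x → S x ≤ β := by
    intro x hx hx0
    refine ge_of_tendsto htend ?_
    filter_upwards [Ioo_mem_nhdsLT hr0] with z hz
    exact hsec z (lt_trans har (by exact_mod_cast hz.1)) x hx (ne_of_lt hz.2) (ne_of_gt hx0)
      (hz.2.le.trans hx0.le)
  have hβ0 : 0 ≤ β := by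
    have h1 : S 1 ≤ β := key2 1 hD1 zero_lt_one
    have h2 : 0 ≤ S 1 := by
      have := hfmono 0 hD0 1 zero_le_one
      simp only [hS]
      rw [sub_zero, div_one]
      linarith
    linarith
  -- the fundamental supporting-line inequality
  have star : ∀ x : ℝ, u x ≤ u 0 + ((x * β : ℝ) : EReal) := by
    have hstarD : ∀ x ∈ D, u x ≤ u 0 + ((x * β : ℝ) : EReal) := by
      intro x hx
      rw [hco x hx, hco 0 hD0, ← EReal.coe_add, EReal.coe_le_coe_iff]
      rcases lt_trichotomy x 0 with hx0 | hx0 | hx0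
      · have h1 : β ≤ (f x - f 0) / (x - 0) := key1 x hx hx0
        rw [sub_zero] at h1
        have h2 : f x - f 0 ≤ β * x := (le_div_iff_of_neg hx0).1 h1
        linarith
      · subst hx0; simp
      · have h1 : (f x - f 0) / (x - 0) ≤ β := key2 x hx hx0
        rw [sub_zero] at h1
        have h2 : f x - f 0 ≤ β * x := (div_le_iff₀ hx0).1 h1
        linarith
    intro x
    rcases lt_trichotomy ((x : EReal)) a with hxa | hxa | hxa
    · rw [hu_bot x hxa]; exact bot_le
    · -- `x` is the (real) left endpoint of the domain
      rcases eq_or_ne (u x) ⊥ with hb | hb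
      · rw [hb]; exact bot_le
      · have hx0 : x < 0 := by
          have : (x : EReal) < 0 := hxa ▸ ha
          exact_mod_cast this
        have hxm : ∀ z ∈ Ioo x (0:ℝ), (u x).toReal ≤ f 0 + z * β := by
          intro z hz
          have hzD : z ∈ D := by
            rw [hD, mem_setOf_eq, ← hxa]; exact_mod_cast hz.1
          have h1 : u x ≤ u 0 + ((z * β : ℝ) : EReal) := (hu_mono hz.1.le).trans (hstarD z hzD)
          rw [hco 0 hD0, ← EReal.coe_add] at h1
          have h2 : u x = (((u x).toReal : ℝ) : EReal) := (EReal.coe_toReal (hu_ne_top x) hb).symm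
          rw [h2] at h1
          exact EReal.coe_le_coe_iff.1 h1
        have hlim : Tendsto (fun z : ℝ => f 0 + z * β) (𝓝[>] x) (𝓝 (f 0 + x * β)) := by
          apply Tendsto.mono_left _ nhdsWithin_le_nhds
          exact (continuous_const.add (continuous_id.mul continuous_const)).tendsto x
        have h3 : (u x).toReal ≤ f 0 + x * β := by
          refine ge_of_tendsto hlim ?_
          filter_upwards [Ioo_mem_nhdsGT hx0] with z hz using hxm z hz
        calc u x = (((u x).toReal : ℝ) : EReal) := (EReal.coe_toReal (hu_ne_top x) hb).symm
          _ ≤ ((f 0 + x * β : ℝ) : EReal) := EReal.coe_le_coe_iff.2 h3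
          _ = u 0 + ((x * β : ℝ) : EReal) := by rw [hco 0 hD0, ← EReal.coe_add]
    · exact hstarD x hxa
  -- `Φ(β) = u 0`
  have hPhiBeta : Phi β = u 0 := by
    rw [hPhi]
    apply le_antisymm
    · refine iSup_le fun x => ?_
      rw [EReal.sub_le_iff_le_add (Or.inl (EReal.coe_ne_bot _)) (Or.inl (EReal.coe_ne_top _))]
      exact star x
    · have h0 : u 0 - ((0 * β : ℝ) : EReal) = u 0 := by
        norm_num
      calc u 0 = u 0 - ((0 * β : ℝ) : EReal) := h0.symm
        _ ≤ ⨆ x : ℝ, (u x - ((x * β : ℝ) : EReal)) := le_iSup (fun x : ℝ => u x - ((x * β : ℝ) : EReal)) 0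
  refine ⟨hβ0, hPhiBeta, ?_, ?_⟩
  · -- case `|y| ≤ β`
    intro y hy
    rw [hPhat]
    rw [ENNReal.iSup_eq_zero]
    intro x
    rw [tsub_eq_zero_iff_le]
    rcases le_or_gt (x * y) 0 with hxy | hxy
    · calc ENNReal.ofReal (x * y) = 0 := by simpa using ENNReal.ofReal_le_ofReal hxy
        _ ≤ uhat x := zero_le
    · have hxyabs : x * y ≤ |x| * β := by
        calc x * y ≤ |x * y| := le_abs_self _
          _ = |x| * |y| := abs_mul x y
          _ ≤ |x| * β := mul_le_mul_of_nonneg_left hy (abs_nonneg x)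
      rcases eq_or_ne (u (-|x|)) ⊥ with hb | hb
      · rw [huhat, hb, EReal.sub_bot (hfin 0 hD0), EReal.toENN_top_s3]
        exact le_top
      · have hstar' := star (-|x|)
        have hm : u (-|x|) = (((u (-|x|)).toReal : ℝ) : EReal) :=
          (EReal.coe_toReal (hu_ne_top _) hb).symm
        set m : ℝ := (u (-|x|)).toReal with hmdef
        have h1 : m ≤ f 0 + (-|x|) * β := by
          rw [hm, hco 0 hD0, ← EReal.coe_add] at hstar'
          exact EReal.coe_le_coe_iff.1 hstar'
        have huhatx : uhat x = ENNReal.ofReal (f 0 - m) := by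
          rw [huhat, hco 0 hD0, hm, ← EReal.coe_sub, EReal.toENN_coe_s3]
        rw [huhatx]
        apply ENNReal.ofReal_le_ofReal
        nlinarith [abs_nonneg x]
  · -- case `β < |y|`
    intro y hy
    set c : ℝ := |y| with hc
    have hβc : β ≤ c := hy.le
    set G : ℝ → ℝ≥0∞ := fun t => ENNReal.ofReal (|t| * c) - uhat t with hG
    set H : ℝ → EReal := fun t => u (-|t|) + ((|t| * c : ℝ) : EReal) with hH
    have huhat_abs : ∀ t : ℝ, uhat |t| = uhat t := by
      intro t; rw [huhat, huhat, abs_abs]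
    have huhat_neg : ∀ t : ℝ, uhat (-t) = uhat t := by
      intro t; rw [huhat, huhat, abs_neg]
    -- `Φ̂(y) = ⨆ t, G t`
    have hPhatG : Phat y = ⨆ t : ℝ, G t := by
      rw [hPhat]
      apply le_antisymm
      · refine iSup_le fun x => ?_
        have h1 : ENNReal.ofReal (x * y) ≤ ENNReal.ofReal (|x| * c) := by
          apply ENNReal.ofReal_le_ofReal
          calc x * y ≤ |x * y| := le_abs_self _
            _ = |x| * c := abs_mul x y
        exact le_trans (tsub_le_tsub h1 le_rfl) (le_iSup G x)
      · refine iSup_le fun t => ?_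
        set s : ℝ := if 0 ≤ y then |t| else -|t| with hs'
        have hsy : s * y = |t| * c := by
          rcases le_or_gt 0 y with h | h
          · rw [hs', if_pos h, hc, abs_of_nonneg h]
          · rw [hs', if_neg (not_le.2 h), hc, abs_of_neg h]; ring
        have hsabs : uhat s = uhat t := by
          rcases le_or_gt 0 y with h | h
          · rw [hs', if_pos h, huhat_abs]
          · rw [hs', if_neg (not_le.2 h), huhat_neg, huhat_abs]
        have : G t = ENNReal.ofReal (s * y) - uhat s := by rw [hsy, hsabs]
        rw [this]
        exact le_iSup (fun x : ℝ => ENNReal.ofReal (x * y) - uhat x) s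
    -- pointwise identification in `EReal`
    have hGH : ∀ t : ℝ, ((G t : ℝ≥0∞) : EReal) = (H t - u 0) ⊔ 0 := by
      intro t
      rcases eq_or_ne (u (-|t|)) ⊥ with hb | hb
      · have huhatt : uhat t = ⊤ := by
          rw [huhat, hb, EReal.sub_bot (hfin 0 hD0), EReal.toENN_top_s3]
        have hGt : G t = 0 := by rw [hG]; simp only [huhatt, ENNReal.sub_top]
        have hHt : H t = ⊥ := by rw [hH]; simp [hb]
        rw [hGt, hHt, hco 0 hD0, EReal.coe_ennreal_zero]
        rw [EReal.bot_sub]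
        simp
      · have hm : u (-|t|) = (((u (-|t|)).toReal : ℝ) : EReal) :=
          (EReal.coe_toReal (hu_ne_top _) hb).symm
        set m : ℝ := (u (-|t|)).toReal with hmdef
        have hm0 : m ≤ f 0 := by
          have h1 : u (-|t|) ≤ u 0 := hu_mono (neg_nonpos.2 (abs_nonneg t))
          exact EReal.toReal_le_toReal h1 hb (hu_ne_top 0)
        have huhatt : uhat t = ENNReal.ofReal (f 0 - m) := by
          rw [huhat, hco 0 hD0, hm, ← EReal.coe_sub, EReal.toENN_coe_s3]
        have hGt : G t = ENNReal.ofReal (|t| * c - (f 0 - m)) := by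
          rw [hG]
          simp only
          rw [huhatt, ← ENNReal.ofReal_sub _ (sub_nonneg.2 hm0)]
        have hHt : H t - u 0 = ((m + |t| * c - f 0 : ℝ) : EReal) := by
          rw [hH]
          simp only
          rw [hm, hco 0 hD0, ← EReal.coe_add, ← EReal.coe_sub]
        rw [hGt, hHt, EReal.coe_ennreal_ofReal]
        have : |t| * c - (f 0 - m) = m + |t| * c - f 0 := by ring
        rw [this]
        rfl
    -- `⨆ t, H t = Φ(c)`
    have hHsup : (⨆ t : ℝ, H t) = Phi c := by
      rw [hPhi]
      apply le_antisymm
      · refine iSup_le fun t => ?_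
        have : H t = u (-|t|) - (((-|t|) * c : ℝ) : EReal) := by
          rw [hH]
          simp only
          rw [sub_eq_add_neg, ← EReal.coe_neg]
          norm_num
        rw [this]
        exact le_iSup (fun x : ℝ => u x - ((x * c : ℝ) : EReal)) (-|t|)
      · refine iSup_le fun x => ?_
        rcases le_or_gt x 0 with hx0 | hx0
        · have : u x - ((x * c : ℝ) : EReal) = H x := by
            rw [hH]
            simp only
            rw [abs_of_nonpos hx0, neg_neg, sub_eq_add_neg, ← EReal.coe_neg]
            norm_num
          rw [this]
          exact le_iSup H x
        · have h1 : u x ≤ u 0 + ((x * c : ℝ) : EReal) := by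
            refine (star x).trans ?_
            have : (x * β : ℝ) ≤ x * c := mul_le_mul_of_nonneg_left hβc hx0.le
            exact add_le_add_right (EReal.coe_le_coe_iff.2 this) _
          have h2 : u x - ((x * c : ℝ) : EReal) ≤ u 0 := by
            calc u x - ((x * c : ℝ) : EReal) ≤ (u 0 + ((x * c : ℝ) : EReal)) - ((x * c : ℝ) : EReal) :=
                EReal.sub_le_sub h1 le_rfl
              _ = u 0 := EReal.add_sub_cancel_right
          have h3 : u 0 = H 0 := by rw [hH]; simp
          rw [h3] at h2
          exact h2.trans (le_iSup H 0)
    -- assemble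
    have hsup_sub : (⨆ t : ℝ, (H t - u 0)) = (⨆ t : ℝ, H t) - u 0 := by
      apply le_antisymm
      · exact iSup_le fun t => EReal.sub_le_sub (le_iSup H t) le_rfl
      · rw [hco 0 hD0]
        rw [EReal.sub_le_iff_le_add (Or.inl (EReal.coe_ne_bot _)) (Or.inl (EReal.coe_ne_top _))]
        refine iSup_le fun t => ?_
        have : H t = (H t - ((f 0 : ℝ) : EReal)) + ((f 0 : ℝ) : EReal) := EReal.sub_add_cancel.symm
        rw [this]
        apply add_le_add_left
        rw [← hco 0 hD0]
        exact le_iSup (fun t => H t - u 0) t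
    have hpos : (0 : EReal) ≤ (⨆ t : ℝ, H t) - u 0 := by
      have h1 : u 0 ≤ ⨆ t : ℝ, H t := by
        have h3 : u 0 = H 0 := by rw [hH]; simp
        rw [h3]; exact le_iSup H 0
      rw [hco 0 hD0] at h1 ⊢
      rw [EReal.le_sub_iff_add_le (Or.inl (EReal.coe_ne_bot _)) (Or.inl (EReal.coe_ne_top _))]
      simpa using h1
    calc ((Phat y : ℝ≥0∞) : EReal) = ((⨆ t : ℝ, G t : ℝ≥0∞) : EReal) := by rw [hPhatG]
      _ = ⨆ t : ℝ, ((G t : ℝ≥0∞) : EReal) := EReal.coe_ennreal_iSup G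
      _ = ⨆ t : ℝ, ((H t - u 0) ⊔ 0) := by simp only [hGH]
      _ = (⨆ t : ℝ, (H t - u 0)) ⊔ (⨆ _ : ℝ, (0 : EReal)) := by rw [← iSup_sup_eq]
      _ = (⨆ t : ℝ, (H t - u 0)) ⊔ 0 := by rw [iSup_const]
      _ = ((⨆ t : ℝ, H t) - u 0) ⊔ 0 := by rw [hsup_sub]
      _ = (⨆ t : ℝ, H t) - u 0 := sup_eq_left.2 hpos
      _ = Phi c - Phi β := by rw [hHsup, hPhiBeta]
      _ = Phi |y| - Phi β := by rw [hc]
end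
end

section
/- Let z : L^∞(P) → ℝ be a positive continuous linear functional (z(f) ≥ 0 whenever f ≥ 0 P-a.s.). The following are equivalent: (i) z is lattice-orthogonal to every order-continuous positive functional, i.e., for every g ∈ L¹(P) with g ≥ 0 and every f ∈ L^∞(P) with f ≥ 0, inf{ z(f - h) + E[g·h] : h ∈ L^∞(P), 0 ≤ h ≤ f } = 0; (ii) there exists a decreasing sequence of measurable sets (A_n) with P(⋂_n A_n) = 0 such that z(f·1_{A_n}) = z(f) for every f ∈ L^∞(P) and every n. -/
open MeasureTheory Filter Set Topology
open scoped ENNReal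

noncomputable section

/-- Lemma 10, case `a` finite.  Let `z` be a positive continuous linear
functional on `L^∞(P)`.  The following are equivalent:
(i) `z` is lattice-orthogonal to every order-continuous positive functional: for every
    `0 ≤ g ∈ L¹(P)` and every `0 ≤ f ∈ L^∞(P)`,
    `inf{ z(f - h) + E[g·h] : h ∈ L^∞, 0 ≤ h ≤ f } = 0`;
(ii) there is a decreasing sequence of measurable sets `(A_n)` with `P(⋂ A_n) = 0` such that
    `z(f·1_{A_n}) = z(f)` for every `f ∈ L^∞(P)` and every `n`. -/
theorem statement5
    {Ω : Type*} [MeasurableSpace Ω] (P : Measure Ω) [IsProbabilityMeasure P]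
    (z : (Ω → ℝ) → ℝ)
    -- `z` is well defined on `P`-equivalence classes
    (hz_ae : ∀ f g : Ω → ℝ, f =ᵐ[P] g → z f = z g)
    -- `z` is linear on `L^∞(P)`
    (hz_add : ∀ f g : Ω → ℝ, MemLp f ⊤ P → MemLp g ⊤ P → z (f + g) = z f + z g)
    (hz_smul : ∀ (c : ℝ) (f : Ω → ℝ), MemLp f ⊤ P → z (c • f) = c * z f)
    -- `z` is positive
    (hz_pos : ∀ f : Ω → ℝ, MemLp f ⊤ P → 0 ≤ᵐ[P] f → 0 ≤ z f)
    -- `z` is continuous for the essential-supremum norm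
    (hz_cont : ∃ C : ℝ, ∀ f : Ω → ℝ, MemLp f ⊤ P → |z f| ≤ C * (eLpNorm f ⊤ P).toReal) :
    ((∀ g : Ω → ℝ, Integrable g P → 0 ≤ᵐ[P] g →
        ∀ f : Ω → ℝ, MemLp f ⊤ P → 0 ≤ᵐ[P] f →
          IsGLB {r : ℝ | ∃ h : Ω → ℝ, MemLp h ⊤ P ∧ 0 ≤ᵐ[P] h ∧ h ≤ᵐ[P] f ∧
              r = z (f - h) + ∫ ω, g ω * h ω ∂P} 0)
      ↔
     (∃ A : ℕ → Set Ω, (∀ n, MeasurableSet (A n)) ∧ (∀ n, A (n + 1) ⊆ A n) ∧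
        P (⋂ n, A n) = 0 ∧
        ∀ f : Ω → ℝ, MemLp f ⊤ P → ∀ n, z ((A n).indicator f) = z f)) := by
  -- z of a difference
  have hz_sub : ∀ f g : Ω → ℝ, MemLp f ⊤ P → MemLp g ⊤ P → z (f - g) = z f - z g := by
    intro f g hf hg
    have hfg : f - g = f + (-1 : ℝ) • g := by
      rw [neg_one_smul, sub_eq_add_neg]
    rw [hfg, hz_add _ _ hf (hg.const_smul _), hz_smul _ _ hg]
    ring
  -- z is monotone
  have hz_mono : ∀ f g : Ω → ℝ, MemLp f ⊤ P → MemLp g ⊤ P → f ≤ᵐ[P] g → z f ≤ z g := by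
    intro f g hf hg hle
    have h0 : 0 ≤ z (g - f) := by
      refine hz_pos _ (hg.sub hf) ?_
      filter_upwards [hle] with ω hω
      simpa using hω
    rw [hz_sub _ _ hg hf] at h0
    linarith
  -- a.e. bound from MemLp ⊤
  have hbound : ∀ f : Ω → ℝ, MemLp f ⊤ P → ∀ᵐ ω ∂P, ‖f ω‖ ≤ (eLpNorm f ⊤ P).toReal := by
    intro f hf
    filter_upwards [ae_le_eLpNormEssSup (f := f) (μ := P)] with ω hω
    have hlt : eLpNormEssSup f P ≠ ⊤ := by
      simpa [eLpNorm_exponent_top] using hf.2.ne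
    calc ‖f ω‖ = ((‖f ω‖₊ : ℝ≥0∞)).toReal := by simp
      _ ≤ (eLpNormEssSup f P).toReal := ENNReal.toReal_mono hlt hω
      _ = (eLpNorm f ⊤ P).toReal := by rw [eLpNorm_exponent_top]
  constructor
  · -- (i) → (ii)
    intro H
    have hone : MemLp (fun _ : Ω => (1:ℝ)) ⊤ P := memLp_top_const 1
    have key := H (fun _ => 1) (integrable_const 1) (ae_of_all _ fun _ => zero_le_one)
        (fun _ => 1) hone (ae_of_all _ fun _ => zero_le_one)
    have hex : ∀ k : ℕ, ∃ h : Ω → ℝ, MemLp h ⊤ P ∧ 0 ≤ᵐ[P] h ∧ h ≤ᵐ[P] (fun _ => (1:ℝ)) ∧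
        z ((fun _ => (1:ℝ)) - h) + ∫ ω, (fun _ : Ω => (1:ℝ)) ω * h ω ∂P < (1/2)^k := by
      intro k
      by_contra hcon
      push_neg at hcon
      have hlbk : (1/2 : ℝ)^k ∈ lowerBounds {r : ℝ | ∃ h : Ω → ℝ, MemLp h ⊤ P ∧
          0 ≤ᵐ[P] h ∧ h ≤ᵐ[P] (fun _ => (1:ℝ)) ∧
          r = z ((fun _ => (1:ℝ)) - h) + ∫ ω, (fun _ : Ω => (1:ℝ)) ω * h ω ∂P} := by
        rintro r ⟨h, h1, h2, h3, rfl⟩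
        exact hcon h h1 h2 h3
      have hle0 := key.2 hlbk
      have hpos : (0:ℝ) < (1/2)^k := by positivity
      linarith
    choose h hmem h0 h1 hsmall using hex
    simp only [one_mul] at hsmall
    have hz1 : ∀ k, 0 ≤ z ((fun _ : Ω => (1:ℝ)) - h k) := fun k =>
      hz_pos _ (hone.sub (hmem k)) (by filter_upwards [h1 k] with ω hω; simpa using hω)
    have hint : ∀ k, 0 ≤ ∫ ω, h k ω ∂P := fun k =>
      integral_nonneg_of_ae (h0 k)
    have hzk : ∀ k, z ((fun _ : Ω => (1:ℝ)) - h k) < (1/2)^k := fun k => by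
      have := hsmall k; linarith [hint k]
    have hintk : ∀ k, ∫ ω, h k ω ∂P < (1/2)^k := fun k => by
      have := hsmall k; linarith [hz1 k]
    -- measurable representatives
    set h' : ℕ → Ω → ℝ := fun k => (hmem k).1.mk (h k) with hh'
    have h'meas : ∀ k, StronglyMeasurable (h' k) := fun k => (hmem k).1.stronglyMeasurable_mk
    have h'ae : ∀ k, h k =ᵐ[P] h' k := fun k => (hmem k).1.ae_eq_mk
    set C : ℕ → Set Ω := fun k => {ω | h' k ω < 1/2} with hC
    have hCmeas : ∀ k, MeasurableSet (C k) := fun k =>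
      measurableSet_lt (h'meas k).measurable measurable_const
    -- Markov inequality: the complement of C k is small
    have hPC : ∀ k, P ((C k)ᶜ) ≤ ENNReal.ofReal (2 * (1/2)^k) := by
      intro k
      have hint' : Integrable (h k) P := (hmem k).integrable le_top
      have hmarkov := mul_meas_ge_le_integral_of_nonneg (h0 k) hint' (1/2)
      have hceq : P ((C k)ᶜ) = P {ω | 1/2 ≤ h k ω} := by
        have hceq2 : (C k)ᶜ = {ω | 1/2 ≤ h' k ω} := by
          ext ω; simp [hC, not_lt]
        rw [hceq2]
        refine measure_congr ?_
        filter_upwards [h'ae k] with ω hω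
        change ((1:ℝ)/2 ≤ h' k ω) = ((1:ℝ)/2 ≤ h k ω)
        rw [hω]
      have htR : (P {ω | 1/2 ≤ h k ω}).toReal ≤ 2 * (1/2)^k := by
        have := hintk k
        rw [measureReal_def] at hmarkov
        nlinarith [hmarkov]
      rw [hceq]
      rw [ENNReal.le_ofReal_iff_toReal_le (measure_ne_top P _) (by positivity)]
      exact htR
    -- z of the indicator of C k is small
    have hzC : ∀ k, z ((C k).indicator (fun _ => (1:ℝ))) ≤ 2 * (1/2)^k := by
      intro k
      have hmem_ind : MemLp ((C k).indicator fun _ => (1:ℝ)) ⊤ P :=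
        (memLp_top_const 1).indicator (hCmeas k)
      have hle : (C k).indicator (fun _ => (1:ℝ)) ≤ᵐ[P] (2:ℝ) • ((fun _ => (1:ℝ)) - h k) := by
        filter_upwards [h'ae k, h0 k, h1 k] with ω hωe hω0 hω1
        by_cases hωC : ω ∈ C k
        · have hωlt : h k ω < 1/2 := by rw [hωe]; exact hωC
          simp only [Set.indicator_of_mem hωC, Pi.smul_apply, Pi.sub_apply, smul_eq_mul]
          linarith
        · have hω1' : h k ω ≤ 1 := hω1
          simp only [Set.indicator_of_notMem hωC, Pi.smul_apply, Pi.sub_apply, smul_eq_mul]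
          linarith
      calc z ((C k).indicator (fun _ => (1:ℝ)))
          ≤ z ((2:ℝ) • ((fun _ => (1:ℝ)) - h k)) :=
            hz_mono _ _ hmem_ind ((hone.sub (hmem k)).const_smul _) hle
        _ = 2 * z ((fun _ : Ω => (1:ℝ)) - h k) := hz_smul _ _ (hone.sub (hmem k))
        _ ≤ 2 * (1/2)^k := by linarith [hzk k]
    refine ⟨fun n => ⋃ k, (C (n + k))ᶜ, fun n => MeasurableSet.iUnion fun k => (hCmeas (n+k)).compl,
      ?_, ?_, ?_⟩
    · intro n
      refine Set.iUnion_subset fun k => ?_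
      have : n + 1 + k = n + (k + 1) := by omega
      rw [this]
      exact Set.subset_iUnion (fun k => (C (n+k))ᶜ) (k+1)
    · -- null intersection
      have hPA : ∀ n, P (⋃ k, (C (n + k))ᶜ) ≤ ENNReal.ofReal (4 * (1/2)^n) := by
        intro n
        have hsum : Summable (fun k : ℕ => 2 * (1/2:ℝ)^(n+k)) := by
          have := (summable_geometric_of_lt_one (by norm_num : (0:ℝ) ≤ 1/2)
            (by norm_num : (1/2:ℝ) < 1)).mul_left (2*(1/2:ℝ)^n)
          refine this.congr fun k => ?_
          rw [pow_add]; ring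
        calc P (⋃ k, (C (n+k))ᶜ) ≤ ∑' k, P ((C (n+k))ᶜ) := measure_iUnion_le _
          _ ≤ ∑' k, ENNReal.ofReal (2 * (1/2)^(n+k)) :=
              ENNReal.tsum_le_tsum (fun k => hPC (n+k))
          _ = ENNReal.ofReal (∑' k, 2 * (1/2:ℝ)^(n+k)) :=
              (ENNReal.ofReal_tsum_of_nonneg (fun k => by positivity) hsum).symm
          _ = ENNReal.ofReal (4 * (1/2)^n) := by
              congr 1
              have heq : ∀ k:ℕ, 2*(1/2:ℝ)^(n+k) = (2*(1/2:ℝ)^n) * (1/2)^k := by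
                intro k; rw [pow_add]; ring
              rw [tsum_congr heq, tsum_mul_left,
                tsum_geometric_of_lt_one (by norm_num) (by norm_num)]
              norm_num
              ring
      have hub : ∀ n, P (⋂ n, ⋃ k, (C (n+k))ᶜ) ≤ ENNReal.ofReal (4 * (1/2:ℝ)^n) :=
        fun n => le_trans (measure_mono (Set.iInter_subset _ n)) (hPA n)
      have htend0 : Tendsto (fun n => ENNReal.ofReal (4 * (1/2:ℝ)^n)) atTop (𝓝 0) := by
        rw [show (0:ℝ≥0∞) = ENNReal.ofReal 0 by simp]
        refine ENNReal.tendsto_ofReal ?_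
        have h12 : Tendsto (fun n : ℕ => (1/2:ℝ)^n) atTop (𝓝 0) :=
          tendsto_pow_atTop_nhds_zero_of_lt_one (by norm_num) (by norm_num)
        simpa using h12.const_mul 4
      exact le_antisymm (ge_of_tendsto' htend0 hub) zero_le
    · intro f hf n
      set D : Set Ω := ⋂ k, C (n + k) with hD
      have hDmeas : MeasurableSet D := MeasurableSet.iInter fun k => hCmeas (n+k)
      have hcompl : (⋃ k, (C (n+k))ᶜ)ᶜ = D := by simp [hD, compl_iUnion]
      have hz1D : z (D.indicator fun _ => (1:ℝ)) = 0 := by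
        have hnn : 0 ≤ z (D.indicator fun _ => (1:ℝ)) :=
          hz_pos _ ((memLp_top_const 1).indicator hDmeas)
            (ae_of_all _ fun ω => Set.indicator_nonneg (fun _ _ => zero_le_one) ω)
        have hub : ∀ k, z (D.indicator fun _ => (1:ℝ)) ≤ 2 * (1/2)^(n+k) := by
          intro k
          refine le_trans (hz_mono _ _ ((memLp_top_const 1).indicator hDmeas)
            ((memLp_top_const 1).indicator (hCmeas (n+k))) (ae_of_all _ fun ω => ?_))
            (hzC (n+k))
          exact Set.indicator_le_indicator_of_subset (Set.iInter_subset _ k)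
            (fun _ => zero_le_one) ω
        have htd : Tendsto (fun k => 2 * (1/2:ℝ)^(n+k)) atTop (𝓝 0) := by
          have h12 : Tendsto (fun k : ℕ => (1/2:ℝ)^k) atTop (𝓝 0) :=
            tendsto_pow_atTop_nhds_zero_of_lt_one (by norm_num) (by norm_num)
          have := h12.const_mul (2*(1/2:ℝ)^n)
          simp only [mul_zero] at this
          refine this.congr fun k => ?_
          rw [pow_add]; ring
        exact le_antisymm (ge_of_tendsto' htd hub) hnn
      set M := (eLpNorm f ⊤ P).toReal with hM
      have hMnn : 0 ≤ M := ENNReal.toReal_nonneg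
      have hDf : MemLp (D.indicator f) ⊤ P := hf.indicator hDmeas
      have hφmem : MemLp (M • D.indicator fun _ => (1:ℝ)) ⊤ P :=
        ((memLp_top_const (μ := P) (1:ℝ)).indicator hDmeas).const_smul M
      have hφmem' : MemLp ((-M) • D.indicator fun _ => (1:ℝ)) ⊤ P :=
        ((memLp_top_const (μ := P) (1:ℝ)).indicator hDmeas).const_smul (-M)
      have hle1 : D.indicator f ≤ᵐ[P] M • D.indicator (fun _ => (1:ℝ)) := by
        filter_upwards [hbound f hf] with ω hω
        by_cases hωD : ω ∈ D
        · simp only [Set.indicator_of_mem hωD, Pi.smul_apply, smul_eq_mul, mul_one]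
          exact le_trans (le_abs_self _) hω
        · simp [Set.indicator_of_notMem hωD]
      have hle2 : (-M) • D.indicator (fun _ => (1:ℝ)) ≤ᵐ[P] D.indicator f := by
        filter_upwards [hbound f hf] with ω hω
        by_cases hωD : ω ∈ D
        · simp only [Set.indicator_of_mem hωD, Pi.smul_apply, smul_eq_mul, mul_one]
          have : |f ω| ≤ M := hω
          linarith [abs_le.mp this]
        · simp [Set.indicator_of_notMem hωD]
      have hzDf : z (D.indicator f) = 0 := by
        have hu := hz_mono _ _ hDf hφmem hle1
        have hl := hz_mono _ _ hφmem' hDf hle2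
        rw [hz_smul _ _ ((memLp_top_const 1).indicator hDmeas), hz1D, mul_zero] at hu hl
        linarith
      have hsplit : f = (⋃ k, (C (n+k))ᶜ).indicator f + D.indicator f := by
        rw [← hcompl]
        exact (Set.indicator_self_add_compl _ f).symm
      have hzf : z f = z ((⋃ k, (C (n+k))ᶜ).indicator f) + z (D.indicator f) := by
        conv_lhs => rw [hsplit]
        exact hz_add _ _ (hf.indicator (MeasurableSet.iUnion fun k => (hCmeas (n+k)).compl)) hDf
      rw [hzf, hzDf, add_zero]

  · -- (ii) → (i)
    rintro ⟨A, hAmeas, hAstep, hAnull, hAz⟩ g hg hg0 f hf hf0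
    have hAanti : Antitone A := antitone_nat_of_succ_le hAstep
    -- every element of the set is nonnegative
    have hlb : ∀ r ∈ {r : ℝ | ∃ h : Ω → ℝ, MemLp h ⊤ P ∧ 0 ≤ᵐ[P] h ∧ h ≤ᵐ[P] f ∧
        r = z (f - h) + ∫ ω, g ω * h ω ∂P}, 0 ≤ r := by
      rintro r ⟨h, hh, hh0, hhf, rfl⟩
      have h1 : 0 ≤ z (f - h) := by
        refine hz_pos _ (hf.sub hh) ?_
        filter_upwards [hhf] with ω hω
        simpa using hω
      have h2 : 0 ≤ ∫ ω, g ω * h ω ∂P := by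
        refine integral_nonneg_of_ae ?_
        filter_upwards [hg0, hh0] with ω h1 h2
        exact mul_nonneg h1 h2
      linarith
    constructor
    · exact hlb
    · -- 0 is the greatest lower bound
      intro b hb
      -- elements r n := ∫ g * (A n).indicator f tend to 0
      set r : ℕ → ℝ := fun n => ∫ ω, g ω * ((A n).indicator f) ω ∂P with hr
      have hmemr : ∀ n, r n ∈ {r : ℝ | ∃ h : Ω → ℝ, MemLp h ⊤ P ∧ 0 ≤ᵐ[P] h ∧ h ≤ᵐ[P] f ∧
          r = z (f - h) + ∫ ω, g ω * h ω ∂P} := by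
        intro n
        refine ⟨(A n).indicator f, hf.indicator (hAmeas n), ?_, ?_, ?_⟩
        · filter_upwards [hf0] with ω hω
          exact Set.indicator_nonneg (fun _ _ => hω) ω
        · filter_upwards [hf0] with ω hω
          by_cases hωA : ω ∈ A n
          · simp [Set.indicator_of_mem hωA]
          · simpa [Set.indicator_of_notMem hωA] using hω
        · rw [hz_sub _ _ hf (hf.indicator (hAmeas n)), hAz f hf n, sub_self, zero_add]
      -- dominated convergence
      have hM : ∀ᵐ ω ∂P, ‖f ω‖ ≤ (eLpNorm f ⊤ P).toReal := by
        filter_upwards [ae_le_eLpNormEssSup (f := f) (μ := P)] with ω hω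
        have hlt : eLpNormEssSup f P ≠ ⊤ := by
          simpa [eLpNorm_exponent_top] using hf.2.ne
        calc ‖f ω‖ = ((‖f ω‖₊ : ℝ≥0∞)).toReal := by simp
          _ ≤ (eLpNormEssSup f P).toReal := ENNReal.toReal_mono hlt hω
          _ = (eLpNorm f ⊤ P).toReal := by rw [eLpNorm_exponent_top]
      have hgf_int : Integrable (fun ω => g ω * f ω) P := by
        simpa [mul_comm] using hg.bdd_mul (f := f) hf.1 hM
      have htend : Tendsto r atTop (𝓝 0) := by
        have hre : ∀ n, r n = ∫ ω, (A n).indicator (fun ω => g ω * f ω) ω ∂P := by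
          intro n
          refine integral_congr_ae (ae_of_all _ fun ω => ?_)
          by_cases hωA : ω ∈ A n
          · simp [Set.indicator_of_mem hωA]
          · simp [Set.indicator_of_notMem hωA]
        have hzero : (∫ ω, (⋂ n, A n).indicator (fun ω => g ω * f ω) ω ∂P) = 0 := by
          refine integral_eq_zero_of_ae ?_
          have : ∀ᵐ ω ∂P, ω ∉ ⋂ n, A n := by
            rw [← measure_eq_zero_iff_ae_notMem] at *
            exact hAnull
          filter_upwards [this] with ω hω
          simp [Set.indicator_of_notMem hω]
        have hdct : Tendsto (fun n => ∫ ω, (A n).indicator (fun ω => g ω * f ω) ω ∂P)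
            atTop (𝓝 (∫ ω, (⋂ n, A n).indicator (fun ω => g ω * f ω) ω ∂P)) := by
          refine tendsto_integral_of_dominated_convergence
            (fun ω => ‖g ω * f ω‖) (fun n => (hg.1.mul hf.1).indicator (hAmeas n))
            hgf_int.norm (fun n => ae_of_all _ fun ω => ?_) (ae_of_all _ fun ω => ?_)
          · exact norm_indicator_le_norm_self _ ω
          · by_cases hω : ω ∈ ⋂ n, A n
            · have : ∀ n, ω ∈ A n := mem_iInter.mp hω
              simp only [Set.indicator_of_mem hω, Set.indicator_of_mem (this _)]
              exact tendsto_const_nhds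
            · obtain ⟨n, hn⟩ : ∃ n, ω ∉ A n := by simpa [mem_iInter] using hω
              have hev : ∀ m, n ≤ m → (A m).indicator (fun ω => g ω * f ω) ω = 0 := by
                intro m hm
                exact Set.indicator_of_notMem (fun hc => hn (hAanti hm hc)) _
              rw [Set.indicator_of_notMem hω]
              refine Tendsto.congr' ?_ tendsto_const_nhds
              filter_upwards [eventually_ge_atTop n] with m hm
              exact (hev m hm).symm
        rw [show (0 : ℝ) = ∫ ω, (⋂ n, A n).indicator (fun ω => g ω * f ω) ω ∂P from hzero.symm]
        simpa [← hre] using hdct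
      exact ge_of_tendsto' htend (fun n => hb (hmemr n))
end
end

section
/- Assume (A1) and (A2). Let η ∈ L⁰(P) with η ≥ 0, E[Φ(η)] < ∞ and 0 < E[η] ≤ 1, and let c ∈ ℝ with c > a·E[η] (no restriction when a = -∞). Then the function λ ↦ λc + E[Φ(λη)] attains its minimum over (0, ∞) at a unique point λ(c; η) > 0, and λ(c; η) is the unique positive solution λ of the first-order condition c + E[η·Φ'(λη)] = 0 (with the convention 0·Φ'(0) := 0 on {η = 0}). -/
open MeasureTheory Filter Set Topology
open scoped ENNReal

noncomputable section
set_option maxHeartbeats 1600000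

/-- Extended-real-valued expectation: the lower integral of the positive part minus the lower
integral of the negative part. -/
def ewp {Ω : Type*} [MeasurableSpace Ω] (P : Measure Ω) (H : Ω → EReal) : EReal :=
  ((∫⁻ ω, (H ω).toENN ∂P : ℝ≥0∞) : EReal) - ((∫⁻ ω, (-(H ω)).toENN ∂P : ℝ≥0∞) : EReal)

lemma aux_coe_lt {a : EReal} {x t : ℝ} (hx : a < (x : EReal)) (h : x ≤ t) : a < (t : EReal) :=
  lt_of_lt_of_le hx (EReal.coe_le_coe_iff.2 h)

lemma aux_nonneg_mem {a : EReal} (ha : a < 0) {x : ℝ} (h0 : (0:ℝ) ≤ x) : a < (x : EReal) := by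
  refine lt_of_lt_of_le ha ?_
  exact_mod_cast h0

lemma aux_tangent {a : EReal} {u : ℝ → EReal} {du : ℝ → ℝ}
    (hdu : ∀ x : ℝ, a < (x : EReal) → HasDerivAt (fun t : ℝ => (u t).toReal) (du x) x)
    (hdu_anti : StrictAntiOn du {x : ℝ | a < (x : EReal)})
    {x0 x : ℝ} (hx0 : a < (x0 : EReal)) (hx : a < (x : EReal)) :
    (u x).toReal ≤ (u x0).toReal + du x0 * (x - x0) := by
  set f : ℝ → ℝ := fun t => (u t).toReal with hf
  rcases lt_trichotomy x x0 with hlt | heq | hgt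
  · have hcont : ContinuousOn f (Icc x x0) := by
      intro t ht
      exact ((hdu t (aux_coe_lt hx ht.1)).continuousAt).continuousWithinAt
    have hderiv : ∀ ξ ∈ Ioo x x0, HasDerivAt f (du ξ) ξ := fun ξ hξ =>
      hdu ξ (aux_coe_lt hx hξ.1.le)
    obtain ⟨ξ, hξ, hslope⟩ := exists_hasDerivAt_eq_slope f du hlt hcont hderiv
    have hmemξ : a < (ξ : EReal) := aux_coe_lt hx hξ.1.le
    have h1 : du x0 < du ξ := hdu_anti hmemξ hx0 hξ.2
    rw [hslope] at h1
    have hpos : 0 < x0 - x := by linarith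
    rw [lt_div_iff₀ hpos] at h1
    nlinarith
  · simp [heq]
  · have hcont : ContinuousOn f (Icc x0 x) := by
      intro t ht
      exact ((hdu t (aux_coe_lt hx0 ht.1)).continuousAt).continuousWithinAt
    have hderiv : ∀ ξ ∈ Ioo x0 x, HasDerivAt f (du ξ) ξ := fun ξ hξ =>
      hdu ξ (aux_coe_lt hx0 hξ.1.le)
    obtain ⟨ξ, hξ, hslope⟩ := exists_hasDerivAt_eq_slope f du hgt hcont hderiv
    have hmemξ : a < (ξ : EReal) := aux_coe_lt hx0 hξ.1.le
    have h1 : du ξ < du x0 := hdu_anti hx0 hmemξ hξ.1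
    rw [hslope] at h1
    have hpos : 0 < x - x0 := by linarith
    rw [div_lt_iff₀ hpos] at h1
    nlinarith

lemma aux_X {a : EReal} (ha : a < 0) {du : ℝ → ℝ}
    (hdu_cont : ContinuousOn du {x : ℝ | a < (x:EReal)})
    (hdu_anti : StrictAntiOn du {x : ℝ | a < (x:EReal)})
    (hdu_inada_top : ∀ M : ℝ, ∃ x : ℝ, a < (x : EReal) ∧ M ≤ du x)
    (hdu_inada_zero : Tendsto du atTop (𝓝 0))
    {y : ℝ} (hy : 0 < y) : ∃ x : ℝ, a < (x:EReal) ∧ du x = y := by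
  obtain ⟨xh, hxh, hyxh⟩ := hdu_inada_top y
  obtain ⟨xl, h0xl, hduxl⟩ : ∃ x : ℝ, (0:ℝ) ≤ x ∧ du x < y := by
    have := (hdu_inada_zero.eventually (gt_mem_nhds hy)).and (eventually_ge_atTop (0:ℝ))
    obtain ⟨x, hx1, hx2⟩ := this.exists
    exact ⟨x, hx2, hx1⟩
  have hxl : a < (xl : EReal) := aux_nonneg_mem ha h0xl
  rcases eq_or_lt_of_le hyxh with heq | hlt
  · exact ⟨xh, hxh, heq.symm⟩
  · have hord : xh < xl := by
      rcases lt_trichotomy xh xl with h | h | h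
      · exact h
      · exfalso; rw [h] at hlt; exact absurd hlt (not_lt.2 hduxl.le)
      · exfalso
        have := hdu_anti hxl hxh h
        linarith
    have hsub : Icc xh xl ⊆ {x : ℝ | a < (x:EReal)} := fun t ht => aux_coe_lt hxh ht.1
    have hivt := intermediate_value_Icc' hord.le (hdu_cont.mono hsub)
    have hmem : y ∈ Icc (du xl) (du xh) := ⟨hduxl.le, hlt.le⟩
    obtain ⟨x, hx, hxy⟩ := hivt hmem
    exact ⟨x, aux_coe_lt hxh hx.1, hxy⟩


lemma aux_fin_coe {u : ℝ → EReal} (hu_ne_top : ∀ x : ℝ, u x ≠ ⊤) {x : ℝ} (h : u x ≠ ⊥) :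
    u x = ((u x).toReal : EReal) := (EReal.coe_toReal (hu_ne_top x) h).symm

lemma aux_env {a : EReal} {u : ℝ → EReal} {du : ℝ → ℝ} {Phi : ℝ → EReal}
    (hu_ne_top : ∀ x : ℝ, u x ≠ ⊤)
    (hu_bot : ∀ x : ℝ, (x : EReal) < a → u x = ⊥)
    (hu_fin : ∀ x : ℝ, a < (x : EReal) → u x ≠ ⊥)
    (hu_mono : Monotone u)
    (hdu : ∀ x : ℝ, a < (x : EReal) → HasDerivAt (fun t : ℝ => (u t).toReal) (du x) x)
    (hdu_anti : StrictAntiOn du {x : ℝ | a < (x : EReal)})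
    (hPhi : ∀ y : ℝ, Phi y = ⨆ x : ℝ, (u x - ((x * y : ℝ) : EReal)))
    {y xy : ℝ} (hy : 0 < y) (hxy : a < (xy:EReal)) (hdxy : du xy = y) :
    Phi y = (((u xy).toReal - xy * y : ℝ) : EReal) := by
  have htan : ∀ x : ℝ, a < (x:EReal) → (u x).toReal ≤ (u xy).toReal + y * (x - xy) := by
    intro x hx
    have := aux_tangent hdu hdu_anti hxy hx
    rwa [hdxy] at this
  apply le_antisymm
  · rw [hPhi]
    apply iSup_le
    intro x
    rcases lt_trichotomy ((x:ℝ) : EReal) a with hxa | hxa | hxa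
    · rw [hu_bot x hxa, EReal.bot_sub]
      exact bot_le
    · -- boundary case x = a
      by_cases hbot : u x = ⊥
      · rw [hbot, EReal.bot_sub]; exact bot_le
      · rw [aux_fin_coe hu_ne_top hbot, ← EReal.coe_sub, EReal.coe_le_coe_iff]
        apply le_of_forall_pos_le_add
        intro ε hε
        have hdy : 0 < ε / y := div_pos hε hy
        set x' : ℝ := x + ε / y with hx'
        have hxx' : x < x' := by
          rw [hx']; linarith
        have hax' : a < (x' : EReal) := by
          rw [← hxa]
          exact_mod_cast hxx'
        have hmono : u x ≤ u x' := hu_mono hxx'.le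
        have hbot' : u x' ≠ ⊥ := hu_fin x' hax'
        have h1 : (u x).toReal ≤ (u x').toReal :=
          EReal.toReal_le_toReal hmono hbot (hu_ne_top x')
        have h2 := htan x' hax'
        have : y * (x' - x) = ε := by
          rw [hx']; field_simp; ring
        nlinarith
    · by_cases hbot : u x = ⊥
      · rw [hbot, EReal.bot_sub]; exact bot_le
      · rw [aux_fin_coe hu_ne_top hbot, ← EReal.coe_sub, EReal.coe_le_coe_iff]
        have := htan x hxa
        nlinarith
  · rw [hPhi]
    have : (((u xy).toReal - xy * y : ℝ) : EReal) = u xy - ((xy * y : ℝ) : EReal) := by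
      rw [EReal.coe_sub, EReal.coe_toReal (hu_ne_top xy) (hu_fin xy hxy)]
    rw [this]
    exact le_iSup (fun x => u x - ((x * y : ℝ) : EReal)) xy


lemma aux_toENN {z : EReal} (h1 : z ≠ ⊤) (h2 : z ≠ ⊥) :
    z.toENN = ENNReal.ofReal z.toReal ∧ (-z).toENN = ENNReal.ofReal (-(z.toReal)) := by
  constructor
  · rw [EReal.toENN, if_neg h1]
  · rw [EReal.toENN, if_neg (fun h => h2 (EReal.neg_eq_top_iff.1 h)), EReal.toReal_neg_eq]

lemma aux_ofReal_le_toENN (z : EReal) : ENNReal.ofReal z.toReal ≤ z.toENN := by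
  rw [EReal.toENN]
  split
  · exact le_top
  · exact le_rfl

lemma aux_ennreal_coe {A : ℝ≥0∞} (h : A ≠ ⊤) : (A : EReal) = ((A.toReal : ℝ) : EReal) := by
  conv_lhs => rw [← ENNReal.ofReal_toReal h]
  rw [EReal.coe_ennreal_ofReal, max_eq_left ENNReal.toReal_nonneg]

/-- Proposition 26, first part.  Assume (A1), (A2).  Let `η ≥ 0` with
`E[Φ(η)] < ∞`, `0 < E[η] ≤ 1`, and `c > a·E[η]`.  Then `λ ↦ λc + E[Φ(λη)]` attains its
minimum over `(0, ∞)` at a unique point `λ(c; η) > 0`, which is the unique positive solution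
of the first-order condition `c + E[η·Φ'(λη)] = 0` (with `0·Φ'(0) := 0` on `{η = 0}`). -/
theorem statement9
    {Ω : Type*} [MeasurableSpace Ω] (P : Measure Ω) [IsProbabilityMeasure P]
    (a : EReal) (ha : a < 0)
    (u : ℝ → EReal)
    (hu_ne_top : ∀ x : ℝ, u x ≠ ⊤)
    (hu_bot : ∀ x : ℝ, (x : EReal) < a → u x = ⊥)
    (hu_fin : ∀ x : ℝ, a < (x : EReal) → u x ≠ ⊥)
    (hu_mono : Monotone u)
    (hu_lim : Tendsto u atBot (𝓝 ⊥))
    (du : ℝ → ℝ)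
    (hdu : ∀ x : ℝ, a < (x : EReal) → HasDerivAt (fun t : ℝ => (u t).toReal) (du x) x)
    (hdu_cont : ContinuousOn du {x : ℝ | a < (x : EReal)})
    (hdu_pos : ∀ x : ℝ, a < (x : EReal) → 0 < du x)
    (hdu_anti : StrictAntiOn du {x : ℝ | a < (x : EReal)})
    (hdu_inada_top : ∀ M : ℝ, ∃ x : ℝ, a < (x : EReal) ∧ M ≤ du x)
    (hdu_inada_zero : Tendsto du atTop (𝓝 0))
    (Phi : ℝ → EReal)
    (hPhi : ∀ y : ℝ, Phi y = ⨆ x : ℝ, (u x - ((x * y : ℝ) : EReal)))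
    (hA2 : ∀ g : Ω → ℝ, Measurable g → (∀ ω, 0 ≤ g ω) →
      ∫⁻ ω, (Phi (g ω)).toENN ∂P < ⊤ →
      ∀ l : ℝ, 0 < l → ∫⁻ ω, (Phi (l * g ω)).toENN ∂P < ⊤)
    (DPhi : ℝ → ℝ)
    (hDPhi : ∀ y : ℝ, 0 < y → HasDerivAt (fun t : ℝ => (Phi t).toReal) (DPhi y) y)
    -- `η ∈ L_Φ` with `0 < E[η] ≤ 1`
    (eta : Ω → ℝ) (heta_meas : Measurable eta) (heta_nonneg : ∀ ω, 0 ≤ eta ω)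
    (hetaPhi : ∫⁻ ω, (Phi (eta ω)).toENN ∂P < ⊤)
    (hmean_pos : 0 < ∫⁻ ω, ENNReal.ofReal (eta ω) ∂P)
    (hmean_le : ∫⁻ ω, ENNReal.ofReal (eta ω) ∂P ≤ 1)
    -- `c > a·E[η]` (no restriction when `a = -∞`)
    (c : ℝ) (hc : a * ((∫⁻ ω, ENNReal.ofReal (eta ω) ∂P : ℝ≥0∞) : EReal) < (c : EReal)) :
    ∃ l : ℝ, 0 < l ∧
      -- `l` minimizes `λ ↦ λc + E[Φ(λη)]` over `(0, ∞)` …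
      (∀ t : ℝ, 0 < t →
        ((l * c : ℝ) : EReal) + ewp P (fun ω => Phi (l * eta ω)) ≤
          ((t * c : ℝ) : EReal) + ewp P (fun ω => Phi (t * eta ω))) ∧
      -- … and it is the unique such minimizer …
      (∀ t : ℝ, 0 < t →
        (∀ s : ℝ, 0 < s →
          ((t * c : ℝ) : EReal) + ewp P (fun ω => Phi (t * eta ω)) ≤
            ((s * c : ℝ) : EReal) + ewp P (fun ω => Phi (s * eta ω))) → t = l) ∧
      -- … it solves the first-order condition `c + E[η·Φ'(lη)] = 0` …
      Integrable (fun ω => if eta ω = 0 then 0 else eta ω * DPhi (l * eta ω)) P ∧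
      c + ∫ ω, (if eta ω = 0 then 0 else eta ω * DPhi (l * eta ω)) ∂P = 0 ∧
      -- … and it is the unique positive solution of this condition
      (∀ t : ℝ, 0 < t →
        Integrable (fun ω => if eta ω = 0 then 0 else eta ω * DPhi (t * eta ω)) P →
        c + ∫ ω, (if eta ω = 0 then 0 else eta ω * DPhi (t * eta ω)) ∂P = 0 → t = l) := by

  classical
  have ha0 : a < ((0:ℝ):EReal) := by exact_mod_cast ha
  set φ : ℝ → ℝ := fun y => (Phi y).toReal with hφdef
  have hXex : ∀ y : ℝ, 0 < y → ∃ x : ℝ, a < (x:EReal) ∧ du x = y :=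
    fun y hy => aux_X ha hdu_cont hdu_anti hdu_inada_top hdu_inada_zero hy
  set X : ℝ → ℝ := fun y => if h : 0 < y then (hXex y h).choose else 0 with hXdef
  have hXa : ∀ y : ℝ, 0 < y → a < ((X y : ℝ):EReal) := by
    intro y hy
    simp only [hXdef, dif_pos hy]
    exact (hXex y hy).choose_spec.1
  have hXdu : ∀ y : ℝ, 0 < y → du (X y) = y := by
    intro y hy
    simp only [hXdef, dif_pos hy]
    exact (hXex y hy).choose_spec.2
  have hPhi_eq : ∀ y : ℝ, 0 < y → Phi y = (((u (X y)).toReal - X y * y : ℝ) : EReal) :=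
    fun y hy => aux_env hu_ne_top hu_bot hu_fin hu_mono hdu hdu_anti hPhi hy (hXa y hy) (hXdu y hy)
  have hPhi_coe : ∀ y : ℝ, 0 < y → Phi y = ((φ y : ℝ) : EReal) := by
    intro y hy
    have : φ y = ((u (X y)).toReal - X y * y : ℝ) := by
      rw [hφdef]; simp only; rw [hPhi_eq y hy, EReal.toReal_coe]
    rw [this, hPhi_eq y hy]
  have hφ_eq : ∀ y : ℝ, 0 < y → φ y = (u (X y)).toReal - X y * y := by
    intro y hy
    have := hPhi_coe y hy
    rw [hPhi_eq y hy] at this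
    exact_mod_cast this.symm
  have hu0 : u 0 ≠ ⊥ := hu_fin 0 ha0
  have hPhi_lb : ∀ y : ℝ, u 0 ≤ Phi y := by
    intro y
    rw [hPhi y]
    have h0 : u 0 - (((0:ℝ) * y : ℝ) : EReal) = u 0 := by
      norm_num
    calc u 0 = u 0 - (((0:ℝ) * y : ℝ) : EReal) := h0.symm
    _ ≤ _ := le_iSup (fun x => u x - ((x * y : ℝ) : EReal)) 0
  have hPhi_ne_bot : ∀ y : ℝ, Phi y ≠ ⊥ := by
    intro y h
    exact hu0 (le_bot_iff.1 (h ▸ hPhi_lb y))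
  set b : ℝ := min ((u 0).toReal) 0 with hbdef
  have hφ_lb : ∀ y : ℝ, 0 ≤ y → b ≤ φ y := by
    intro y _
    by_cases htop : Phi y = ⊤
    · have : φ y = 0 := by rw [hφdef]; simp only; rw [htop]; rfl
      rw [this]
      exact min_le_right _ _
    · have h1 : (u 0).toReal ≤ (Phi y).toReal :=
        EReal.toReal_le_toReal (hPhi_lb y) hu0 htop
      exact le_trans (min_le_left _ _) h1
  -- affine minorant and derivative identification
  have hmin' : ∀ y : ℝ, 0 < y → ∀ y' : ℝ, 0 < y' → φ y + (-(X y)) * (y' - y) ≤ φ y' := by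
    intro y hy y' hy'
    have h1 : u (X y) - ((X y * y' : ℝ) : EReal) ≤ Phi y' := by
      rw [hPhi y']
      exact le_iSup (fun x => u x - ((x * y' : ℝ) : EReal)) (X y)
    rw [hPhi_coe y' hy', aux_fin_coe hu_ne_top (hu_fin (X y) (hXa y hy)), ← EReal.coe_sub,
      EReal.coe_le_coe_iff] at h1
    rw [hφ_eq y hy]
    linarith
  have hDPhi_eq : ∀ y : ℝ, 0 < y → DPhi y = -(X y) := by
    intro y hy
    have hloc : IsLocalMin (fun y' => φ y' - (φ y + (-(X y)) * (y' - y))) y := by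
      refine Filter.eventually_of_mem (Ioi_mem_nhds hy) ?_
      intro y' hy'
      have := hmin' y hy y' hy'
      simp only
      nlinarith
    have hd : HasDerivAt (fun y' => φ y' - (φ y + (-(X y)) * (y' - y)))
        (DPhi y - (-(X y))) y := by
      have h1 : HasDerivAt (fun y' : ℝ => φ y + (-(X y)) * (y' - y)) (-(X y)) y := by
        have h2 : HasDerivAt (fun y' : ℝ => y' - y) 1 y := (hasDerivAt_id y).sub_const y
        have h3 := (h2.const_mul (-(X y))).const_add (φ y)
        simpa using h3
      exact (hDPhi y hy).sub h1
    have := hloc.hasDerivAt_eq_zero hd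
    linarith
  have hDPhi_strict : ∀ y1 y2 : ℝ, 0 < y1 → y1 < y2 → DPhi y1 < DPhi y2 := by
    intro y1 y2 hy1 h12
    have hy2 : 0 < y2 := lt_trans hy1 h12
    rw [hDPhi_eq y1 hy1, hDPhi_eq y2 hy2, neg_lt_neg_iff]
    rcases lt_trichotomy (X y2) (X y1) with h | h | h
    · exact h
    · exfalso
      have := hXdu y1 hy1
      rw [← h, hXdu y2 hy2] at this
      linarith
    · exfalso
      have := hdu_anti (hXa y1 hy1) (hXa y2 hy2) h
      rw [hXdu y1 hy1, hXdu y2 hy2] at this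
      linarith
  have hDPhi_mono : ∀ y1 y2 : ℝ, 0 < y1 → y1 ≤ y2 → DPhi y1 ≤ DPhi y2 := by
    intro y1 y2 hy1 h12
    rcases eq_or_lt_of_le h12 with h | h
    · rw [h]
    · exact (hDPhi_strict y1 y2 hy1 h).le
  have hminDP : ∀ y : ℝ, 0 < y → ∀ y' : ℝ, 0 < y' → φ y + DPhi y * (y' - y) ≤ φ y' := by
    intro y hy y' hy'
    rw [hDPhi_eq y hy]
    exact hmin' y hy y' hy'
  -- measurability
  have hφ_cont : ContinuousOn φ (Ioi (0:ℝ)) := by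
    intro y hy
    exact ((hDPhi y hy).continuousAt).continuousWithinAt
  have hApos' : MeasurableSet {ω | 0 < eta ω} := measurableSet_lt measurable_const heta_meas
  have hmeas_h : ∀ t : ℝ, 0 < t → AEStronglyMeasurable (fun ω => φ (t * eta ω)) P := by
    intro t ht
    set A := {ω | 0 < eta ω} with hA
    have hsplit : P.restrict A + P.restrict Aᶜ = P := Measure.restrict_add_restrict_compl hApos'
    rw [← hsplit, aestronglyMeasurable_add_measure_iff]
    constructor
    · have hηm : AEMeasurable (fun ω => t * eta ω) (P.restrict A) :=
        (heta_meas.const_mul t).aemeasurable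
      have hmem : ∀ᵐ x ∂((P.restrict A).map (fun ω => t * eta ω)), x ∈ Ioi (0:ℝ) := by
        refine (ae_map_iff hηm measurableSet_Ioi).2 ?_
        rw [ae_restrict_iff' hApos']
        filter_upwards with ω hω
        exact mul_pos ht hω
      have hc : AEMeasurable φ (((P.restrict A).map (fun ω => t * eta ω)).restrict (Ioi 0)) :=
        hφ_cont.aemeasurable measurableSet_Ioi
      rw [Measure.restrict_eq_self_of_ae_mem hmem] at hc
      exact (hc.comp_aemeasurable hηm).aestronglyMeasurable
    · have : (fun ω => φ (t * eta ω)) =ᵐ[P.restrict Aᶜ] fun _ => φ 0 := by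
        rw [EventuallyEq, ae_restrict_iff' hApos'.compl]
        filter_upwards with ω hω
        have h0 : eta ω = 0 := le_antisymm (not_lt.1 hω) (heta_nonneg ω)
        rw [h0, mul_zero]
      exact aestronglyMeasurable_const.congr this.symm
  have hlin_top : ∀ t : ℝ, 0 < t → ∫⁻ ω, (Phi (t * eta ω)).toENN ∂P < ⊤ :=
    fun t ht => hA2 eta heta_meas heta_nonneg hetaPhi t ht
  have hint_h : ∀ t : ℝ, 0 < t → Integrable (fun ω => φ (t * eta ω)) P := by
    intro t ht
    refine ⟨hmeas_h t ht, ?_⟩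
    rw [HasFiniteIntegral]
    have key : ∀ ω, (‖φ (t * eta ω)‖₊ : ℝ≥0∞) ≤ (Phi (t * eta ω)).toENN + ENNReal.ofReal |b| := by
      intro ω
      have hnn : 0 ≤ t * eta ω := mul_nonneg ht.le (heta_nonneg ω)
      have hlb : b ≤ φ (t * eta ω) := hφ_lb _ hnn
      rw [← enorm_eq_nnnorm, Real.enorm_eq_ofReal_abs]
      rcases le_or_gt 0 (φ (t * eta ω)) with hf | hf
      · rw [abs_of_nonneg hf]
        exact le_trans (aux_ofReal_le_toENN (Phi (t * eta ω))) le_self_add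
      · have h1 : |φ (t * eta ω)| ≤ |b| := by
          rw [abs_of_neg hf]
          rcases le_or_gt 0 b with hb | hb
          · linarith
          · rw [abs_of_neg hb]; linarith
        exact le_trans (ENNReal.ofReal_le_ofReal h1) le_add_self
    calc ∫⁻ ω, (‖φ (t * eta ω)‖₊ : ℝ≥0∞) ∂P
        ≤ ∫⁻ ω, ((Phi (t * eta ω)).toENN + ENNReal.ofReal |b|) ∂P := lintegral_mono key
      _ = (∫⁻ ω, (Phi (t * eta ω)).toENN ∂P) + ENNReal.ofReal |b| * P univ := by
          rw [lintegral_add_right _ measurable_const, lintegral_const]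
      _ < ⊤ := by
          apply ENNReal.add_lt_top.2
          exact ⟨hlin_top t ht, by rw [measure_univ, mul_one]; exact ENNReal.ofReal_lt_top⟩
  have hN0 : Phi 0 = ⊤ → P {ω | eta ω = 0} = 0 := by
    intro htop
    by_contra hne
    have hms : MeasurableSet {ω | eta ω = 0} := heta_meas (measurableSet_singleton 0)
    have h1 : ∫⁻ ω in {ω | eta ω = 0}, (Phi (eta ω)).toENN ∂P = ⊤ := by
      have h2 : ∫⁻ ω in {ω | eta ω = 0}, (Phi (eta ω)).toENN ∂P
          = ∫⁻ _ in {ω | eta ω = 0}, (⊤:ℝ≥0∞) ∂P := by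
        apply setLIntegral_congr_fun hms
        intro ω hω
        have hω' : eta ω = 0 := hω
        simp [EReal.toENN, hω', htop]
      rw [h2, setLIntegral_const, ENNReal.top_mul hne]
    have h3 : ∫⁻ ω in {ω | eta ω = 0}, (Phi (eta ω)).toENN ∂P ≤ ∫⁻ ω, (Phi (eta ω)).toENN ∂P :=
      lintegral_mono' Measure.restrict_le_self le_rfl
    rw [h1] at h3
    exact absurd (lt_of_le_of_lt h3 hetaPhi) (lt_irrefl ⊤)
  have hPhi_ne_top : ∀ y : ℝ, 0 < y → Phi y ≠ ⊤ := by
    intro y hy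
    rw [hPhi_coe y hy]
    exact EReal.coe_ne_top _
  have hewp : ∀ t : ℝ, 0 < t →
      ewp P (fun ω => Phi (t * eta ω)) = ((∫ ω, φ (t * eta ω) ∂P : ℝ) : EReal) := by
    intro t ht
    have hint := hint_h t ht
    have haepos : ∀ᵐ ω ∂P, (Phi (t * eta ω)).toENN = ENNReal.ofReal (φ (t * eta ω)) ∧
        (-(Phi (t * eta ω))).toENN = ENNReal.ofReal (-(φ (t * eta ω))) := by
      have hgen : ∀ ω, eta ω ≠ 0 ∨ Phi 0 ≠ ⊤ →
          (Phi (t * eta ω)).toENN = ENNReal.ofReal (φ (t * eta ω)) ∧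
          (-(Phi (t * eta ω))).toENN = ENNReal.ofReal (-(φ (t * eta ω))) := by
        intro ω hω
        have hnetop : Phi (t * eta ω) ≠ ⊤ := by
          rcases hω with h | h
          · exact hPhi_ne_top _ (mul_pos ht ((heta_nonneg ω).lt_of_ne (Ne.symm h)))
          · intro habs
            rcases eq_or_ne (eta ω) 0 with h0 | h0
            · rw [h0, mul_zero] at habs; exact h habs
            · exact (hPhi_ne_top _ (mul_pos ht ((heta_nonneg ω).lt_of_ne (Ne.symm h0)))) habs
        exact aux_toENN hnetop (hPhi_ne_bot _)
      by_cases hP0 : Phi 0 = ⊤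
      · have := hN0 hP0
        have hae : ∀ᵐ ω ∂P, eta ω ≠ 0 := by
          rw [ae_iff]
          simpa using this
        filter_upwards [hae] with ω hω
        exact hgen ω (Or.inl hω)
      · filter_upwards with ω
        exact hgen ω (Or.inr hP0)
    have hfin1 : ∫⁻ ω, ENNReal.ofReal (φ (t * eta ω)) ∂P ≠ ⊤ := by
      have hle : ∫⁻ ω, ENNReal.ofReal (φ (t * eta ω)) ∂P ≤ ∫⁻ ω, (‖φ (t * eta ω)‖₊ : ℝ≥0∞) ∂P := by
        apply lintegral_mono
        intro ω
        show ENNReal.ofReal (φ (t * eta ω)) ≤ (‖φ (t * eta ω)‖₊ : ℝ≥0∞)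
        rw [← enorm_eq_nnnorm, Real.enorm_eq_ofReal_abs]
        exact ENNReal.ofReal_le_ofReal (le_abs_self _)
      exact (lt_of_le_of_lt hle hint.2).ne
    have hfin2 : ∫⁻ ω, ENNReal.ofReal (-(φ (t * eta ω))) ∂P ≠ ⊤ := by
      have hle : ∫⁻ ω, ENNReal.ofReal (-(φ (t * eta ω))) ∂P
          ≤ ∫⁻ ω, (‖φ (t * eta ω)‖₊ : ℝ≥0∞) ∂P := by
        apply lintegral_mono
        intro ω
        show ENNReal.ofReal (-(φ (t * eta ω))) ≤ (‖φ (t * eta ω)‖₊ : ℝ≥0∞)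
        rw [← enorm_eq_nnnorm, Real.enorm_eq_ofReal_abs]
        exact ENNReal.ofReal_le_ofReal (neg_le_abs _)
      exact (lt_of_le_of_lt hle hint.2).ne
    rw [ewp, lintegral_congr_ae (haepos.mono fun ω h => h.1),
      lintegral_congr_ae (haepos.mono fun ω h => h.2),
      integral_eq_lintegral_pos_part_sub_lintegral_neg_part hint,
      aux_ennreal_coe hfin1, aux_ennreal_coe hfin2, ← EReal.coe_sub]
  set g : ℝ → Ω → ℝ := fun t ω => if eta ω = 0 then 0 else eta ω * DPhi (t * eta ω) with hgdef
  have hchain : ∀ (t : ℝ) (ω : Ω), 0 < t → 0 < eta ω →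
      HasDerivAt (fun s : ℝ => φ (s * eta ω)) (eta ω * DPhi (t * eta ω)) t := by
    intro t ω ht hη
    have h1 : HasDerivAt (fun x : ℝ => x * eta ω) (eta ω) t := hasDerivAt_mul_const (eta ω)
    have h2 : HasDerivAt φ (DPhi (t * eta ω)) (t * eta ω) := hDPhi _ (mul_pos ht hη)
    have h3 := h2.comp t h1
    rw [mul_comm] at h3
    exact h3
  have hgmeas : ∀ t : ℝ, 0 < t → AEStronglyMeasurable (g t) P := by
    intro t ht
    set q : ℕ → Ω → ℝ := fun n ω =>
      (φ ((t + 1/((n:ℝ)+1)) * eta ω) - φ (t * eta ω)) * ((n:ℝ)+1) with hqdef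
    have hqmeas : ∀ n, AEStronglyMeasurable (q n) P := by
      intro n
      have hpos : (0:ℝ) < t + 1/((n:ℝ)+1) := by positivity
      exact ((hmeas_h _ hpos).sub (hmeas_h t ht)).mul_const _
    have hlim : ∀ ω, Tendsto (fun n => q n ω) atTop (𝓝 (g t ω)) := by
      intro ω
      by_cases h0 : eta ω = 0
      · have : ∀ n, q n ω = 0 := by
          intro n
          simp [hqdef, h0]
        rw [show g t ω = 0 by simp [hgdef, h0]]
        simpa [this] using tendsto_const_nhds
      · have hη : 0 < eta ω := (heta_nonneg ω).lt_of_ne (Ne.symm h0)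
        have hd := hchain t ω ht hη
        rw [hasDerivAt_iff_tendsto_slope] at hd
        have hseq : Tendsto (fun n : ℕ => t + 1/((n:ℝ)+1)) atTop (𝓝[≠] t) := by
          apply tendsto_nhdsWithin_of_tendsto_nhds_of_eventually_within
          · have := tendsto_one_div_add_atTop_nhds_zero_nat (𝕜 := ℝ)
            have h2 := tendsto_const_nhds (x := t) (f := atTop (α := ℕ)) |>.add this
            simpa using h2
          · filter_upwards with n
            have : (0:ℝ) < 1/((n:ℝ)+1) := by positivity
            simp only [mem_compl_iff, mem_singleton_iff]
            intro habs
            have : (1:ℝ)/((n:ℝ)+1) = 0 := by linarith [habs ▸ (rfl : t + 1/((n:ℝ)+1) = t + 1/((n:ℝ)+1))]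
            linarith
        have hcomp := hd.comp hseq
        have hq : ∀ n : ℕ, q n ω = slope (fun s => φ (s * eta ω)) t (t + 1/((n:ℝ)+1)) := by
          intro n
          have hne : ((n:ℝ)+1) ≠ 0 := by positivity
          rw [slope_def_field]
          have hden : t + 1/((n:ℝ)+1) - t = 1/((n:ℝ)+1) := by ring
          rw [hden, div_div_eq_mul_div, div_one]
        have hgval : g t ω = eta ω * DPhi (t * eta ω) := by simp [hgdef, h0]
        rw [hgval]
        apply Tendsto.congr (fun n => (hq n).symm)
        exact hcomp
    exact aestronglyMeasurable_of_tendsto_ae atTop hqmeas (Eventually.of_forall hlim)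
  have hgint : ∀ t : ℝ, 0 < t → Integrable (g t) P := by
    intro t ht
    have h2t : (0:ℝ) < 2*t := by linarith
    have hht : (0:ℝ) < t/2 := by linarith
    have hBint : Integrable (fun ω => (1/t) * |φ (2*t * eta ω) - φ (t * eta ω)|
        + (2/t) * |φ (t * eta ω) - φ (t/2 * eta ω)|) P := by
      apply Integrable.add
      · exact (((hint_h (2*t) h2t).sub (hint_h t ht)).abs).const_mul _
      · exact (((hint_h t ht).sub (hint_h (t/2) hht)).abs).const_mul _
    refine Integrable.mono hBint (hgmeas t ht) ?_
    filter_upwards with ω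
    rw [Real.norm_eq_abs, Real.norm_eq_abs, abs_of_nonneg (by positivity :
      (0:ℝ) ≤ (1/t) * |φ (2*t * eta ω) - φ (t * eta ω)|
        + (2/t) * |φ (t * eta ω) - φ (t/2 * eta ω)|)]
    by_cases h0 : eta ω = 0
    · have hz : g t ω = 0 := by simp [hgdef, h0]
      rw [hz, abs_zero]
      positivity
    · have hη : 0 < eta ω := (heta_nonneg ω).lt_of_ne (Ne.symm h0)
      have hy : 0 < t * eta ω := mul_pos ht hη
      have hgv : g t ω = eta ω * DPhi (t * eta ω) := by simp [hgdef, h0]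
      have i1 := hminDP (t * eta ω) hy (2*t * eta ω) (mul_pos h2t hη)
      have i2 := hminDP (t * eta ω) hy (t/2 * eta ω) (mul_pos hht hη)
      have e1 : 2*t * eta ω - t * eta ω = t * eta ω := by ring
      have e2 : t/2 * eta ω - t * eta ω = -(t/2 * eta ω) := by ring
      rw [e1] at i1
      rw [e2] at i2
      have hb1 : eta ω * DPhi (t * eta ω) ≤ (1/t) * |φ (2*t * eta ω) - φ (t * eta ω)| := by
        have h1 : DPhi (t * eta ω) * (t * eta ω) ≤ φ (2*t * eta ω) - φ (t * eta ω) := by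
          linarith
        have h2 : φ (2*t * eta ω) - φ (t * eta ω) ≤ |φ (2*t * eta ω) - φ (t * eta ω)| :=
          le_abs_self _
        have h3 : eta ω * DPhi (t * eta ω) = (1/t) * (DPhi (t * eta ω) * (t * eta ω)) := by
          field_simp
        have h4 : (0:ℝ) ≤ 1/t := by positivity
        rw [h3]
        calc (1/t) * (DPhi (t * eta ω) * (t * eta ω))
            ≤ (1/t) * (φ (2*t * eta ω) - φ (t * eta ω)) := mul_le_mul_of_nonneg_left h1 h4
          _ ≤ (1/t) * |φ (2*t * eta ω) - φ (t * eta ω)| := mul_le_mul_of_nonneg_left h2 h4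
      have hb2 : -(eta ω * DPhi (t * eta ω)) ≤ (2/t) * |φ (t * eta ω) - φ (t/2 * eta ω)| := by
        have h1 : -(DPhi (t * eta ω) * (t/2 * eta ω)) ≤ φ (t/2 * eta ω) - φ (t * eta ω) := by
          linarith
        have h2 : φ (t/2 * eta ω) - φ (t * eta ω) ≤ |φ (t * eta ω) - φ (t/2 * eta ω)| := by
          rw [abs_sub_comm]
          exact le_abs_self _
        have h3 : -(eta ω * DPhi (t * eta ω)) = (2/t) * (-(DPhi (t * eta ω) * (t/2 * eta ω))) := by
          field_simp
        have h4 : (0:ℝ) ≤ 2/t := by positivity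
        rw [h3]
        calc (2/t) * (-(DPhi (t * eta ω) * (t/2 * eta ω)))
            ≤ (2/t) * (φ (t/2 * eta ω) - φ (t * eta ω)) := mul_le_mul_of_nonneg_left h1 h4
          _ ≤ (2/t) * |φ (t * eta ω) - φ (t/2 * eta ω)| := mul_le_mul_of_nonneg_left h2 h4
      rw [hgv, abs_le]
      have hpos1 : (0:ℝ) ≤ (1/t) * |φ (2*t * eta ω) - φ (t * eta ω)| := by positivity
      have hpos2 : (0:ℝ) ≤ (2/t) * |φ (t * eta ω) - φ (t/2 * eta ω)| := by positivity
      exact ⟨by linarith, by linarith⟩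
  set F : ℝ → ℝ := fun t => t * c + ∫ ω, φ (t * eta ω) ∂P with hFdef
  set G : ℝ → ℝ := fun t => c + ∫ ω, g t ω ∂P with hGdef
  have hderivF : ∀ t : ℝ, 0 < t → HasDerivAt F (G t) t := by
    intro t ht
    have hε : (0:ℝ) < t/2 := by linarith
    have h2t : (0:ℝ) < 2*t := by linarith
    have hkey := hasDerivAt_integral_of_dominated_loc_of_deriv_le (μ := P) (x₀ := t)
      (F := fun s ω => φ (s * eta ω)) (F' := g)
      (bound := fun ω => |g (t/2) ω| + |g (2*t) ω|) (Metric.ball_mem_nhds t hε)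
      ?hFmeas ?hFint ?hF'meas ?hbound ?hbint ?hdiff
    case hFmeas =>
      filter_upwards [eventually_gt_nhds ht] with s hs
      exact hmeas_h s hs
    case hFint => exact hint_h t ht
    case hF'meas => exact hgmeas t ht
    case hbound =>
      filter_upwards with ω
      intro s hs
      rw [Metric.mem_ball, Real.dist_eq] at hs
      have hs1 : t/2 < s := by
        rcases abs_lt.1 hs with ⟨h1, _⟩
        linarith
      have hs0 : 0 < s := by linarith
      rw [Real.norm_eq_abs]
      by_cases h0 : eta ω = 0
      · have : g s ω = 0 := by simp [hgdef, h0]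
        rw [this, abs_zero]
        positivity
      · have hη : 0 < eta ω := (heta_nonneg ω).lt_of_ne (Ne.symm h0)
        have hs2 : s < 2*t := by
          rcases abs_lt.1 hs with ⟨_, h2⟩
          linarith
        have hgvs : g s ω = eta ω * DPhi (s * eta ω) := by simp [hgdef, h0]
        have hgv1 : g (t/2) ω = eta ω * DPhi (t/2 * eta ω) := by simp [hgdef, h0]
        have hgv2 : g (2*t) ω = eta ω * DPhi (2*t * eta ω) := by simp [hgdef, h0]
        have hm1 : DPhi (t/2 * eta ω) ≤ DPhi (s * eta ω) :=
          hDPhi_mono _ _ (mul_pos hε hη) (by nlinarith)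
        have hm2 : DPhi (s * eta ω) ≤ DPhi (2*t * eta ω) :=
          hDPhi_mono _ _ (mul_pos hs0 hη) (by nlinarith)
        rw [hgvs, abs_le]
        constructor
        · have : -(eta ω * DPhi (s * eta ω)) ≤ -(eta ω * DPhi (t/2 * eta ω)) := by
            apply neg_le_neg
            exact mul_le_mul_of_nonneg_left hm1 (heta_nonneg ω)
          have h2 : -(eta ω * DPhi (t/2 * eta ω)) ≤ |g (t/2) ω| := by
            rw [hgv1]
            exact neg_le_abs _
          have h3 : (0:ℝ) ≤ |g (2*t) ω| := abs_nonneg _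
          linarith
        · have h1 : eta ω * DPhi (s * eta ω) ≤ eta ω * DPhi (2*t * eta ω) :=
            mul_le_mul_of_nonneg_left hm2 (heta_nonneg ω)
          have h2 : eta ω * DPhi (2*t * eta ω) ≤ |g (2*t) ω| := by
            rw [hgv2]
            exact le_abs_self _
          have h3 : (0:ℝ) ≤ |g (t/2) ω| := abs_nonneg _
          linarith
    case hbint => exact ((hgint _ hε).abs).add ((hgint _ h2t).abs)
    case hdiff =>
      filter_upwards with ω
      intro s hs
      rw [Metric.mem_ball, Real.dist_eq] at hs
      have hs0 : 0 < s := by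
        rcases abs_lt.1 hs with ⟨h1, _⟩
        linarith
      by_cases h0 : eta ω = 0
      · have hconst : (fun s : ℝ => φ (s * eta ω)) = fun _ => φ 0 := by
          funext s'
          rw [h0, mul_zero]
        have : g s ω = 0 := by simp [hgdef, h0]
        rw [this, hconst]
        exact hasDerivAt_const _ _
      · have hη : 0 < eta ω := (heta_nonneg ω).lt_of_ne (Ne.symm h0)
        have : g s ω = eta ω * DPhi (s * eta ω) := by simp [hgdef, h0]
        rw [this]
        exact hchain s ω hs0 hη
    have hlin : HasDerivAt (fun s : ℝ => s * c) c t := hasDerivAt_mul_const c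
    have := hlin.add hkey.2
    simpa [hFdef, hGdef, add_comm, Pi.add_def] using this
  have hApos : 0 < P {ω | 0 < eta ω} := by
    by_contra h
    push_neg at h
    have h0 : P {ω | 0 < eta ω} = 0 := le_antisymm h (by positivity)
    have hae : ∀ᵐ ω ∂P, ¬ (0 < eta ω) := by
      rw [ae_iff]
      simpa using h0
    have hz : ∫⁻ ω, ENNReal.ofReal (eta ω) ∂P = 0 := by
      rw [lintegral_eq_zero_iff' (heta_meas.ennreal_ofReal.aemeasurable)]
      filter_upwards [hae] with ω hω
      have : eta ω = 0 := le_antisymm (not_lt.1 hω) (heta_nonneg ω)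
      simp [this]
    rw [hz] at hmean_pos
    exact absurd hmean_pos (lt_irrefl 0)
  have hGmono : ∀ t1 t2 : ℝ, 0 < t1 → t1 < t2 → G t1 < G t2 := by
    intro t1 t2 ht1 h12
    have ht2 : 0 < t2 := lt_trans ht1 h12
    have hint1 := hgint t1 ht1
    have hint2 := hgint t2 ht2
    have hdiff : 0 < ∫ ω, (g t2 ω - g t1 ω) ∂P := by
      rw [integral_pos_iff_support_of_nonneg_ae]
      · refine lt_of_lt_of_le hApos (measure_mono ?_)
        intro ω hω
        have hω' : 0 < eta ω := hω
        have hgt : 0 < g t2 ω - g t1 ω := by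
          have h0 : eta ω ≠ 0 := hω'.ne'
          have hv1 : g t1 ω = eta ω * DPhi (t1 * eta ω) := by simp [hgdef, h0]
          have hv2 : g t2 ω = eta ω * DPhi (t2 * eta ω) := by simp [hgdef, h0]
          rw [hv1, hv2, sub_pos]
          exact mul_lt_mul_of_pos_left
            (hDPhi_strict _ _ (mul_pos ht1 hω') (by nlinarith)) hω'
        exact Function.mem_support.2 hgt.ne'
      · filter_upwards with ω
        by_cases h0 : eta ω = 0
        · simp [hgdef, h0]
        · have hη : 0 < eta ω := (heta_nonneg ω).lt_of_ne (Ne.symm h0)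
          have hv1 : g t1 ω = eta ω * DPhi (t1 * eta ω) := by simp [hgdef, h0]
          have hv2 : g t2 ω = eta ω * DPhi (t2 * eta ω) := by simp [hgdef, h0]
          show (0:ℝ) ≤ g t2 ω - g t1 ω
          rw [hv1, hv2, sub_nonneg]
          exact mul_le_mul_of_nonneg_left
            (hDPhi_mono _ _ (mul_pos ht1 hη) (by nlinarith)) (heta_nonneg ω)
      · exact hint2.sub hint1
    rw [integral_sub hint2 hint1] at hdiff
    simp only [hGdef]
    linarith
  have hdu_antitone : ∀ x1 x2 : ℝ, a < (x1:EReal) → a < (x2:EReal) → x1 ≤ x2 → du x2 ≤ du x1 := by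
    intro x1 x2 h1 h2 hle
    rcases eq_or_lt_of_le hle with h | h
    · rw [h]
    · exact (hdu_anti h1 h2 h).le
  have hXlarge : ∀ M : ℝ, ∃ δ : ℝ, 0 < δ ∧ ∀ y : ℝ, 0 < y → y < δ → M ≤ X y := by
    intro M
    set M' : ℝ := max M 0 + 1 with hM'def
    have hM'nn : (0:ℝ) ≤ M' := by positivity
    have hM' : a < (M' : EReal) := aux_nonneg_mem ha hM'nn
    refine ⟨du M', hdu_pos M' hM', ?_⟩
    intro y hy hyδ
    have hXy : M' < X y := by
      by_contra h
      push_neg at h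
      have := hdu_antitone (X y) M' (hXa y hy) hM' h
      rw [hXdu y hy] at this
      linarith
    have : M ≤ max M 0 := le_max_left _ _
    linarith
  have hGneg : ∃ t : ℝ, 0 < t ∧ G t < 0 := by
    by_contra hcon
    push_neg at hcon
    have htpos : ∀ n : ℕ, (0:ℝ) < 1/((n:ℝ)+1) := fun n => by positivity
    have htle1 : ∀ n : ℕ, (1:ℝ)/((n:ℝ)+1) ≤ 1 := by
      intro n
      rw [div_le_one (by positivity)]
      simp
    set q : ℕ → Ω → ℝ := fun n ω => g 1 ω - g (1/((n:ℝ)+1)) ω with hq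
    have hqint : ∀ n, Integrable (q n) P := fun n => (hgint 1 one_pos).sub (hgint _ (htpos n))
    have hqnonneg : ∀ n ω, 0 ≤ q n ω := by
      intro n ω
      rw [hq]
      simp only [sub_nonneg]
      by_cases h0 : eta ω = 0
      · simp [hgdef, h0]
      · have hη : 0 < eta ω := (heta_nonneg ω).lt_of_ne (Ne.symm h0)
        have hv1 : g (1/((n:ℝ)+1)) ω = eta ω * DPhi (1/((n:ℝ)+1) * eta ω) := by simp [hgdef, h0]
        have hv2 : g 1 ω = eta ω * DPhi (1 * eta ω) := by simp [hgdef, h0]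
        rw [hv1, hv2]
        refine mul_le_mul_of_nonneg_left (hDPhi_mono _ _ (mul_pos (htpos n) hη) ?_) (heta_nonneg ω)
        have := htle1 n
        nlinarith
    have hibdd : ∀ n, ∫ ω, q n ω ∂P ≤ ∫ ω, g 1 ω ∂P + c := by
      intro n
      have h1 := hcon (1/((n:ℝ)+1)) (htpos n)
      rw [hGdef] at h1
      simp only at h1
      rw [hq]
      rw [integral_sub (hgint 1 one_pos) (hgint _ (htpos n))]
      linarith
    have htend : ∀ ω, 0 < eta ω → Tendsto (fun n => q n ω) atTop atTop := by
      intro ω hη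
      have hXt : Tendsto (fun n : ℕ => X (1/((n:ℝ)+1) * eta ω)) atTop atTop := by
        rw [tendsto_atTop]
        intro M
        obtain ⟨δ, hδ, hM⟩ := hXlarge M
        have h1 : Tendsto (fun n : ℕ => 1/((n:ℝ)+1) * eta ω) atTop (𝓝 0) := by
          have h2 := tendsto_one_div_add_atTop_nhds_zero_nat.mul_const (eta ω)
          simpa using h2
        filter_upwards [h1.eventually (gt_mem_nhds hδ)] with n hn
        exact hM _ (mul_pos (htpos n) hη) hn
      have hqeq : ∀ n, q n ω = eta ω * DPhi (1 * eta ω)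
          + eta ω * X (1/((n:ℝ)+1) * eta ω) := by
        intro n
        have h0 : eta ω ≠ 0 := hη.ne'
        have hv1 : g (1/((n:ℝ)+1)) ω = eta ω * DPhi (1/((n:ℝ)+1) * eta ω) := by simp [hgdef, h0]
        have hv2 : g 1 ω = eta ω * DPhi (1 * eta ω) := by simp [hgdef, h0]
        rw [hq]
        simp only
        rw [hv1, hv2, hDPhi_eq _ (mul_pos (htpos n) hη)]
        ring
      have h3 : Tendsto (fun n : ℕ => eta ω * X (1/((n:ℝ)+1) * eta ω)) atTop atTop :=
        hXt.const_mul_atTop hη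
      have h4 := tendsto_atTop_add_const_left atTop (eta ω * DPhi (1 * eta ω)) h3
      exact h4.congr (fun n => (hqeq n).symm)
    -- Fatou contradiction
    have hmeasq : ∀ n, AEMeasurable (fun ω => ENNReal.ofReal (q n ω)) P := fun n =>
      ((hqint n).1.aemeasurable).ennreal_ofReal
    have hfatou := lintegral_liminf_le' (u := atTop) hmeasq
    have hlow : (⊤:ℝ≥0∞) ≤ ∫⁻ ω, liminf (fun n => ENNReal.ofReal (q n ω)) atTop ∂P := by
      have h2 : ∫⁻ ω in {ω | 0 < eta ω}, (⊤:ℝ≥0∞) ∂P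
          ≤ ∫⁻ ω in {ω | 0 < eta ω}, liminf (fun n => ENNReal.ofReal (q n ω)) atTop ∂P := by
        apply lintegral_mono_ae
        rw [ae_restrict_iff' hApos']
        filter_upwards with ω hω
        have h1 : Tendsto (fun n => ENNReal.ofReal (q n ω)) atTop (𝓝 ⊤) :=
          ENNReal.tendsto_ofReal_atTop.comp (htend ω hω)
        rw [h1.liminf_eq]
      have h3 : ∫⁻ ω in {ω | 0 < eta ω}, liminf (fun n => ENNReal.ofReal (q n ω)) atTop ∂P
          ≤ ∫⁻ ω, liminf (fun n => ENNReal.ofReal (q n ω)) atTop ∂P :=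
        lintegral_mono' Measure.restrict_le_self le_rfl
      rw [setLIntegral_const, ENNReal.top_mul hApos.ne'] at h2
      exact le_trans h2 h3
    have hup : liminf (fun n => ∫⁻ ω, ENNReal.ofReal (q n ω) ∂P) atTop
        ≤ ENNReal.ofReal (∫ ω, g 1 ω ∂P + c) := by
      have h1 : ∀ n, ∫⁻ ω, ENNReal.ofReal (q n ω) ∂P ≤ ENNReal.ofReal (∫ ω, g 1 ω ∂P + c) := by
        intro n
        rw [← ofReal_integral_eq_lintegral_ofReal (hqint n)
          (Eventually.of_forall (hqnonneg n))]
        exact ENNReal.ofReal_le_ofReal (hibdd n)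
      calc liminf (fun n => ∫⁻ ω, ENNReal.ofReal (q n ω) ∂P) atTop
          ≤ liminf (fun _ : ℕ => ENNReal.ofReal (∫ ω, g 1 ω ∂P + c)) atTop :=
            liminf_le_liminf (Eventually.of_forall h1)
        _ = ENNReal.ofReal (∫ ω, g 1 ω ∂P + c) := liminf_const _
    have : (⊤:ℝ≥0∞) ≤ ENNReal.ofReal (∫ ω, g 1 ω ∂P + c) :=
      le_trans (le_trans hlow hfatou) hup
    exact absurd (lt_of_le_of_lt this ENNReal.ofReal_lt_top) (lt_irrefl ⊤)
  have htn_pos : ∀ n : ℕ, (0:ℝ) < (n:ℝ)+1 := fun n => by positivity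
  have htn_tendsto : Tendsto (fun n : ℕ => ((n:ℝ)+1)) atTop atTop :=
    tendsto_atTop_add_const_right atTop 1 tendsto_natCast_atTop_atTop
  have hGpos : ∃ t : ℝ, 0 < t ∧ 0 < G t := by
    rcases eq_or_ne a ⊥ with habot | habot
    · -- `a = ⊥` : Fatou argument, `G t → +∞`
      by_contra hcon
      push_neg at hcon
      have hXsmall : ∀ M : ℝ, ∃ Y : ℝ, ∀ y : ℝ, Y ≤ y → X y ≤ M := by
        intro M
        have haM : a < (M:EReal) := by rw [habot]; exact EReal.bot_lt_coe M
        refine ⟨max (du M + 1) 1, fun y hY => ?_⟩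
        have hy : 0 < y := lt_of_lt_of_le one_pos (le_trans (le_max_right _ _) hY)
        by_contra h
        push_neg at h
        have h2 := hdu_anti haM (hXa y hy) h
        rw [hXdu y hy] at h2
        have h3 : du M + 1 ≤ y := le_trans (le_max_left _ _) hY
        linarith
      set q : ℕ → Ω → ℝ := fun n ω => g ((n:ℝ)+1) ω - g 1 ω with hq
      have hqint : ∀ n, Integrable (q n) P := fun n => (hgint _ (htn_pos n)).sub (hgint 1 one_pos)
      have hqnonneg : ∀ n ω, 0 ≤ q n ω := by
        intro n ω
        rw [hq]
        simp only [sub_nonneg]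
        by_cases h0 : eta ω = 0
        · simp [hgdef, h0]
        · have hη : 0 < eta ω := (heta_nonneg ω).lt_of_ne (Ne.symm h0)
          have hv1 : g ((n:ℝ)+1) ω = eta ω * DPhi (((n:ℝ)+1) * eta ω) := by simp [hgdef, h0]
          have hv2 : g 1 ω = eta ω * DPhi (1 * eta ω) := by simp [hgdef, h0]
          rw [hv1, hv2]
          refine mul_le_mul_of_nonneg_left (hDPhi_mono _ _ (by nlinarith) ?_) (heta_nonneg ω)
          nlinarith [htn_pos n, (by exact_mod_cast Nat.zero_le n : (0:ℝ) ≤ (n:ℝ))]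
      have hibdd : ∀ n, ∫ ω, q n ω ∂P ≤ -c - ∫ ω, g 1 ω ∂P := by
        intro n
        have h1 := hcon ((n:ℝ)+1) (htn_pos n)
        rw [hGdef] at h1
        simp only at h1
        rw [hq]
        rw [integral_sub (hgint _ (htn_pos n)) (hgint 1 one_pos)]
        linarith
      have htend : ∀ ω, 0 < eta ω → Tendsto (fun n => q n ω) atTop atTop := by
        intro ω hη
        have hXt : Tendsto (fun n : ℕ => -X (((n:ℝ)+1) * eta ω)) atTop atTop := by
          rw [tendsto_atTop]
          intro M
          obtain ⟨Y, hY⟩ := hXsmall (-M)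
          have h1 : Tendsto (fun n : ℕ => ((n:ℝ)+1) * eta ω) atTop atTop :=
            htn_tendsto.atTop_mul_const hη
          filter_upwards [h1.eventually (eventually_ge_atTop Y)] with n hn
          have := hY _ hn
          linarith
        have hqeq : ∀ n, q n ω = eta ω * (-X (((n:ℝ)+1) * eta ω))
            + (-(eta ω * DPhi (1 * eta ω))) := by
          intro n
          have h0 : eta ω ≠ 0 := hη.ne'
          have hv1 : g ((n:ℝ)+1) ω = eta ω * DPhi (((n:ℝ)+1) * eta ω) := by simp [hgdef, h0]
          have hv2 : g 1 ω = eta ω * DPhi (1 * eta ω) := by simp [hgdef, h0]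
          rw [hq]
          simp only
          rw [hv1, hv2, hDPhi_eq _ (by nlinarith : (0:ℝ) < ((n:ℝ)+1) * eta ω)]
          ring
        have h3 : Tendsto (fun n : ℕ => eta ω * (-X (((n:ℝ)+1) * eta ω))) atTop atTop :=
          hXt.const_mul_atTop hη
        have h4 := tendsto_atTop_add_const_right atTop (-(eta ω * DPhi (1 * eta ω))) h3
        exact h4.congr (fun n => (hqeq n).symm)
      have hmeasq : ∀ n, AEMeasurable (fun ω => ENNReal.ofReal (q n ω)) P := fun n =>
        ((hqint n).1.aemeasurable).ennreal_ofReal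
      have hfatou := lintegral_liminf_le' (u := atTop) hmeasq
      have hlow : (⊤:ℝ≥0∞) ≤ ∫⁻ ω, liminf (fun n => ENNReal.ofReal (q n ω)) atTop ∂P := by
        have h2 : ∫⁻ ω in {ω | 0 < eta ω}, (⊤:ℝ≥0∞) ∂P
            ≤ ∫⁻ ω in {ω | 0 < eta ω}, liminf (fun n => ENNReal.ofReal (q n ω)) atTop ∂P := by
          apply lintegral_mono_ae
          rw [ae_restrict_iff' hApos']
          filter_upwards with ω hω
          have h1 : Tendsto (fun n => ENNReal.ofReal (q n ω)) atTop (𝓝 ⊤) :=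
            ENNReal.tendsto_ofReal_atTop.comp (htend ω hω)
          rw [h1.liminf_eq]
        have h3 : ∫⁻ ω in {ω | 0 < eta ω}, liminf (fun n => ENNReal.ofReal (q n ω)) atTop ∂P
            ≤ ∫⁻ ω, liminf (fun n => ENNReal.ofReal (q n ω)) atTop ∂P :=
          lintegral_mono' Measure.restrict_le_self le_rfl
        rw [setLIntegral_const, ENNReal.top_mul hApos.ne'] at h2
        exact le_trans h2 h3
      have hup : liminf (fun n => ∫⁻ ω, ENNReal.ofReal (q n ω) ∂P) atTop
          ≤ ENNReal.ofReal (-c - ∫ ω, g 1 ω ∂P) := by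
        have h1 : ∀ n, ∫⁻ ω, ENNReal.ofReal (q n ω) ∂P
            ≤ ENNReal.ofReal (-c - ∫ ω, g 1 ω ∂P) := by
          intro n
          rw [← ofReal_integral_eq_lintegral_ofReal (hqint n)
            (Eventually.of_forall (hqnonneg n))]
          exact ENNReal.ofReal_le_ofReal (hibdd n)
        calc liminf (fun n => ∫⁻ ω, ENNReal.ofReal (q n ω) ∂P) atTop
            ≤ liminf (fun _ : ℕ => ENNReal.ofReal (-c - ∫ ω, g 1 ω ∂P)) atTop :=
              liminf_le_liminf (Eventually.of_forall h1)
          _ = ENNReal.ofReal (-c - ∫ ω, g 1 ω ∂P) := liminf_const _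
      have : (⊤:ℝ≥0∞) ≤ ENNReal.ofReal (-c - ∫ ω, g 1 ω ∂P) :=
        le_trans (le_trans hlow hfatou) hup
      exact absurd (lt_of_le_of_lt this ENNReal.ofReal_lt_top) (lt_irrefl ⊤)
    · -- `a` finite : monotone convergence towards `c - a·E[η] > 0`
      have haTne : a ≠ ⊤ := ne_top_of_lt (lt_trans ha (by norm_num : (0:EReal) < ⊤))
      have haR : a = ((a.toReal : ℝ) : EReal) := (EReal.coe_toReal haTne habot).symm
      have hEne : (∫⁻ ω, ENNReal.ofReal (eta ω) ∂P) ≠ ⊤ :=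
        (lt_of_le_of_lt hmean_le ENNReal.one_lt_top).ne
      have hinteta : Integrable eta P := by
        refine ⟨heta_meas.aestronglyMeasurable, ?_⟩
        rw [hasFiniteIntegral_iff_ofReal (Eventually.of_forall heta_nonneg)]
        exact lt_of_le_of_lt hmean_le ENNReal.one_lt_top
      have hEint : ∫ ω, eta ω ∂P = (∫⁻ ω, ENNReal.ofReal (eta ω) ∂P).toReal := by
        rw [integral_eq_lintegral_of_nonneg_ae (Eventually.of_forall heta_nonneg)
          heta_meas.aestronglyMeasurable]
      have hcR : a.toReal * (∫⁻ ω, ENNReal.ofReal (eta ω) ∂P).toReal < c := by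
        have := hc
        rw [haR, aux_ennreal_coe hEne, ← EReal.coe_mul, EReal.coe_lt_coe_iff] at this
        exact this
      have hXnear : ∀ ε : ℝ, 0 < ε → ∃ Y : ℝ, ∀ y : ℝ, Y ≤ y → 0 < y →
          X y < a.toReal + ε := by
        intro ε hε
        have haε : a < ((a.toReal + ε : ℝ) : EReal) := by
          conv_lhs => rw [haR]
          exact_mod_cast (by linarith : a.toReal < a.toReal + ε)
        refine ⟨du (a.toReal + ε) + 1, ?_⟩
        intro y hY hy
        by_contra h
        push_neg at h
        have h2 := hdu_antitone (a.toReal + ε) (X y) haε (hXa y hy) h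
        rw [hXdu y hy] at h2
        linarith
      have hXgtaR : ∀ y : ℝ, 0 < y → a.toReal < X y := by
        intro y hy
        have := hXa y hy
        rw [haR] at this
        exact_mod_cast this
      have hmono_ae : ∀ᵐ ω ∂P, Monotone fun n : ℕ => g ((n:ℝ)+1) ω := by
        filter_upwards with ω
        intro n m hnm
        show g ((n:ℝ)+1) ω ≤ g ((m:ℝ)+1) ω
        by_cases h0 : eta ω = 0
        · simp [hgdef, h0]
        · have hη : 0 < eta ω := (heta_nonneg ω).lt_of_ne (Ne.symm h0)
          have hv1 : g ((n:ℝ)+1) ω = eta ω * DPhi (((n:ℝ)+1) * eta ω) := by simp [hgdef, h0]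
          have hv2 : g ((m:ℝ)+1) ω = eta ω * DPhi (((m:ℝ)+1) * eta ω) := by simp [hgdef, h0]
          rw [hv1, hv2]
          have hnm' : ((n:ℝ)+1) ≤ ((m:ℝ)+1) := by
            have : (n:ℝ) ≤ (m:ℝ) := by exact_mod_cast hnm
            linarith
          refine mul_le_mul_of_nonneg_left (hDPhi_mono _ _ (by nlinarith) ?_) (heta_nonneg ω)
          nlinarith
      have htend_ae : ∀ᵐ ω ∂P, Tendsto (fun n : ℕ => g ((n:ℝ)+1) ω) atTop
          (𝓝 (eta ω * (-(a.toReal)))) := by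
        filter_upwards with ω
        by_cases h0 : eta ω = 0
        · have : ∀ n : ℕ, g ((n:ℝ)+1) ω = 0 := fun n => by simp [hgdef, h0]
          rw [h0]
          simpa [this] using tendsto_const_nhds
        · have hη : 0 < eta ω := (heta_nonneg ω).lt_of_ne (Ne.symm h0)
          have hXtend : Tendsto (fun n : ℕ => X (((n:ℝ)+1) * eta ω)) atTop (𝓝 a.toReal) := by
            rw [Metric.tendsto_atTop]
            intro ε hε
            obtain ⟨Y, hY⟩ := hXnear ε hε
            obtain ⟨N, hN⟩ := exists_nat_ge (Y / eta ω)
            refine ⟨N, fun n hn => ?_⟩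
            have hyy : 0 < ((n:ℝ)+1) * eta ω := by nlinarith
            have hyY : Y ≤ ((n:ℝ)+1) * eta ω := by
              have h1 : (N:ℝ) ≤ (n:ℝ) := by exact_mod_cast hn
              have h2 : Y / eta ω ≤ (n:ℝ)+1 := by linarith
              calc Y = (Y / eta ω) * eta ω := by field_simp
                _ ≤ ((n:ℝ)+1) * eta ω := mul_le_mul_of_nonneg_right h2 (heta_nonneg ω)
            have h3 := hY _ hyY hyy
            have h4 := hXgtaR _ hyy
            rw [Real.dist_eq, abs_lt]
            constructor <;> linarith
          have hgeq : ∀ n : ℕ, g ((n:ℝ)+1) ω = eta ω * (-X (((n:ℝ)+1) * eta ω)) := by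
            intro n
            have hv1 : g ((n:ℝ)+1) ω = eta ω * DPhi (((n:ℝ)+1) * eta ω) := by
              simp [hgdef, h0]
            rw [hv1, hDPhi_eq _ (by nlinarith : (0:ℝ) < ((n:ℝ)+1) * eta ω)]
          have h5 : Tendsto (fun n : ℕ => eta ω * (-X (((n:ℝ)+1) * eta ω))) atTop
              (𝓝 (eta ω * (-(a.toReal)))) := (hXtend.neg).const_mul (eta ω)
          exact h5.congr (fun n => (hgeq n).symm)
      have hlimint : Integrable (fun ω => eta ω * (-(a.toReal))) P := hinteta.mul_const _
      have hMCT := integral_tendsto_of_tendsto_of_monotone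
        (fun n => hgint _ (htn_pos n)) hlimint hmono_ae htend_ae
      have hlimval : ∫ ω, eta ω * (-(a.toReal)) ∂P
          = (∫⁻ ω, ENNReal.ofReal (eta ω) ∂P).toReal * (-(a.toReal)) := by
        rw [integral_mul_const, hEint]
      have hgt : -c < ∫ ω, eta ω * (-(a.toReal)) ∂P := by
        rw [hlimval]
        nlinarith
      have hev := hMCT.eventually (eventually_gt_nhds hgt)
      obtain ⟨n, hn⟩ := hev.exists
      refine ⟨(n:ℝ)+1, htn_pos n, ?_⟩
      rw [hGdef]
      simp only
      linarith
  obtain ⟨l, hl, hGl⟩ : ∃ l : ℝ, 0 < l ∧ G l = 0 := by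
    obtain ⟨t0, ht0, hGt0⟩ := hGneg
    obtain ⟨t1, ht1, hGt1⟩ := hGpos
    have h01 : t0 < t1 := by
      by_contra h
      push_neg at h
      rcases eq_or_lt_of_le h with h' | h'
      · rw [h'] at hGt1; linarith
      · have := hGmono t1 t0 ht1 h'; linarith
    have hder : ∀ x ∈ Icc t0 t1, HasDerivWithinAt F (G x) (Icc t0 t1) x := by
      intro x hx
      exact (hderivF x (lt_of_lt_of_le ht0 hx.1)).hasDerivWithinAt
    obtain ⟨l, hlmem, hGl⟩ := exists_hasDerivWithinAt_eq_of_gt_of_lt h01.le hder hGt0 hGt1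
    exact ⟨l, lt_trans ht0 hlmem.1, hGl⟩
  have hFstrict : ∀ t : ℝ, 0 < t → t ≠ l → F l < F t := by
    intro t ht htne
    rcases lt_or_gt_of_ne htne with h | h
    · have hcont : ContinuousOn F (Icc t l) := fun x hx =>
        ((hderivF x (lt_of_lt_of_le ht hx.1)).continuousAt).continuousWithinAt
      obtain ⟨ξ, hξ, hslope⟩ := exists_hasDerivAt_eq_slope F G h hcont
        (fun x hx => hderivF x (lt_of_lt_of_le ht hx.1.le))
      have hξ0 : 0 < ξ := lt_trans ht hξ.1
      have hGξ : G ξ < 0 := by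
        have := hGmono ξ l hξ0 hξ.2
        linarith
      have hlt : 0 < l - t := by linarith
      have h2 : F l - F t = G ξ * (l - t) := by
        rw [hslope]
        exact (div_mul_cancel₀ (F l - F t) (ne_of_gt hlt)).symm
      have h3 : G ξ * (l - t) < 0 := mul_neg_of_neg_of_pos hGξ hlt
      linarith
    · have hcont : ContinuousOn F (Icc l t) := fun x hx =>
        ((hderivF x (lt_of_lt_of_le hl hx.1)).continuousAt).continuousWithinAt
      obtain ⟨ξ, hξ, hslope⟩ := exists_hasDerivAt_eq_slope F G h hcont
        (fun x hx => hderivF x (lt_of_lt_of_le hl hx.1.le))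
      have hGξ : 0 < G ξ := by
        have := hGmono l ξ hl hξ.1
        linarith
      have hlt : 0 < t - l := by linarith
      have h2 : F t - F l = G ξ * (t - l) := by
        rw [hslope]
        exact (div_mul_cancel₀ (F t - F l) (ne_of_gt hlt)).symm
      have h3 : 0 < G ξ * (t - l) := mul_pos hGξ hlt
      linarith
  have hFmin : ∀ t : ℝ, 0 < t → F l ≤ F t := by
    intro t ht
    rcases eq_or_ne t l with h | h
    · rw [h]
    · exact (hFstrict t ht h).le
  refine ⟨l, hl, ?_, ?_, ?_, ?_, ?_⟩
  · intro t ht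
    rw [hewp t ht, hewp l hl, ← EReal.coe_add, ← EReal.coe_add, EReal.coe_le_coe_iff]
    exact hFmin t ht
  · intro t ht hmin
    by_contra hne
    have h1 := hmin l hl
    rw [hewp t ht, hewp l hl, ← EReal.coe_add, ← EReal.coe_add, EReal.coe_le_coe_iff] at h1
    exact absurd h1 (not_le.2 (hFstrict t ht hne))
  · exact hgint l hl
  · have : G l = 0 := hGl
    rw [hGdef] at this
    simpa [hgdef] using this
  · intro t ht _ hroot
    by_contra hne
    have hGt : G t = 0 := by
      rw [hGdef]
      simpa [hgdef] using hroot
    rcases lt_or_gt_of_ne hne with h | h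
    · exact absurd (hGl ▸ hGt ▸ hGmono t l ht h) (lt_irrefl 0)
    · exact absurd (hGl ▸ hGt ▸ hGmono l t hl h) (lt_irrefl 0)

end
end
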